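/- arXiv:2209.04552 — 5 statements merged into one kernel-verified Lean document; each statement's English description precedes it below -/
import Mathlib

section
/- If G is a connected claw-free simple graph with minimum degree at least 1 and C is a minimum vertex cover of G, then there exists a zero forcing set S of G with |S| = |C| = β(G) and |S ∩ C| ≥ |C| − 1. -/
open SimpleGraph

namespace ZFPaper

variable {V : Type*} {W : Type*}

/-- The degree of a vertex, as the cardinality of its neighbor set. -/
noncomputable def degSet (G : SimpleGraph V) (v : V) : ℕ := (G.neighborSet v).ncard

/-- The maximum degree of a graph. -/
noncomputable def maxDeg (G : SimpleGraph V) : ℕ := sSup {d : ℕ | ∃ v, degSet G v = d}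

/-- The minimum degree of a graph. -/
noncomputable def minDeg (G : SimpleGraph V) : ℕ := sInf {d : ℕ | ∃ v, degSet G v = d}

/-- A set of vertices is a vertex cover if every edge has an endpoint in it. -/
def IsVC (G : SimpleGraph V) (C : Set V) : Prop :=
  ∀ ⦃u w : V⦄, G.Adj u w → u ∈ C ∨ w ∈ C

/-- The vertex cover number β(G). -/
noncomputable def vcNum (G : SimpleGraph V) : ℕ :=
  sInf {m : ℕ | ∃ C : Set V, IsVC G C ∧ C.ncard = m}

/-- A set of vertices is independent if its vertices are pairwise non-adjacent. -/
def IsIndep (G : SimpleGraph V) (S : Set V) : Prop :=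
  ∀ ⦃u : V⦄, u ∈ S → ∀ ⦃w : V⦄, w ∈ S → ¬ G.Adj u w

/-- The independence number α(G). -/
noncomputable def indepNum (G : SimpleGraph V) : ℕ :=
  sSup {m : ℕ | ∃ S : Set V, IsIndep G S ∧ S.ncard = m}

/-- `Forced G B v` means that, starting from the blue set `B`, the vertex `v` is
eventually colored blue by the zero forcing process: a blue vertex with a unique
white neighbor forces that neighbor to become blue. -/
inductive Forced (G : SimpleGraph V) (B : Set V) : V → Prop
  | init : ∀ v ∈ B, Forced G B v
  | force : ∀ u w : V, Forced G B u → G.Adj u w →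
      (∀ x : V, G.Adj u x → x ≠ w → Forced G B x) → Forced G B w

/-- A zero forcing set: iterating the forcing process colors every vertex blue. -/
def IsZFS (G : SimpleGraph V) (B : Set V) : Prop := ∀ v : V, Forced G B v

/-- The zero forcing number Z(G). -/
noncomputable def zfNum (G : SimpleGraph V) : ℕ :=
  sInf {m : ℕ | ∃ B : Set V, IsZFS G B ∧ B.ncard = m}

/-- A graph is claw-free if it has no induced `K_{1,3}`. -/
def ClawFree (G : SimpleGraph V) : Prop :=
  ¬ ∃ (v a b c : V), G.Adj v a ∧ G.Adj v b ∧ G.Adj v c ∧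
      a ≠ b ∧ a ≠ c ∧ b ≠ c ∧ ¬ G.Adj a b ∧ ¬ G.Adj a c ∧ ¬ G.Adj b c

/-- The join `G ∨ H` of two graphs: disjoint union plus all edges between the parts. -/
def joinG (G : SimpleGraph V) (H : SimpleGraph W) : SimpleGraph (V ⊕ W) where
  Adj a b :=
    (∃ u v, a = Sum.inl u ∧ b = Sum.inl v ∧ G.Adj u v) ∨
    (∃ u v, a = Sum.inr u ∧ b = Sum.inr v ∧ H.Adj u v) ∨
    (∃ u v, a = Sum.inl u ∧ b = Sum.inr v) ∨
    (∃ u v, a = Sum.inr u ∧ b = Sum.inl v)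
  symm := by
    constructor
    rintro a b (⟨u, v, rfl, rfl, h⟩ | ⟨u, v, rfl, rfl, h⟩ | ⟨u, v, rfl, rfl⟩ | ⟨u, v, rfl, rfl⟩)
    · exact Or.inl ⟨v, u, rfl, rfl, h.symm⟩
    · exact Or.inr (Or.inl ⟨v, u, rfl, rfl, h.symm⟩)
    · exact Or.inr (Or.inr (Or.inr ⟨v, u, rfl, rfl⟩))
    · exact Or.inr (Or.inr (Or.inl ⟨v, u, rfl, rfl⟩))
  loopless := by
    constructor
    rintro a (⟨u, v, rfl, h, hadj⟩ | ⟨u, v, rfl, h, hadj⟩ | ⟨u, v, rfl, h⟩ | ⟨u, v, rfl, h⟩) <;>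
      simp_all

/-- The graph obtained from `G` by a `k`-leaf support vertex addition at `v`:
a new support vertex `w = Sum.inr none` is attached to `v`, and `k` new leaves
`Sum.inr (some i)` are attached to `w`. -/
def lsva (G : SimpleGraph V) (v : V) (k : ℕ) : SimpleGraph (V ⊕ Option (Fin k)) where
  Adj a b :=
    (∃ x y, a = Sum.inl x ∧ b = Sum.inl y ∧ G.Adj x y) ∨
    (a = Sum.inl v ∧ b = Sum.inr none) ∨
    (a = Sum.inr none ∧ b = Sum.inl v) ∨
    (∃ i : Fin k, a = Sum.inr none ∧ b = Sum.inr (some i)) ∨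
    (∃ i : Fin k, a = Sum.inr (some i) ∧ b = Sum.inr none)
  symm := by
    constructor
    rintro a b (⟨x, y, rfl, rfl, h⟩ | ⟨rfl, rfl⟩ | ⟨rfl, rfl⟩ | ⟨i, rfl, rfl⟩ | ⟨i, rfl, rfl⟩)
    · exact Or.inl ⟨y, x, rfl, rfl, h.symm⟩
    · exact Or.inr (Or.inr (Or.inl ⟨rfl, rfl⟩))
    · exact Or.inr (Or.inl ⟨rfl, rfl⟩)
    · exact Or.inr (Or.inr (Or.inr (Or.inr ⟨i, rfl, rfl⟩)))
    · exact Or.inr (Or.inr (Or.inr (Or.inl ⟨i, rfl, rfl⟩)))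
  loopless := by
    constructor
    rintro a (⟨x, y, rfl, h, hadj⟩ | ⟨rfl, h⟩ | ⟨rfl, h⟩ | ⟨i, rfl, h⟩ | ⟨i, rfl, h⟩) <;> simp_all

/-- `LSVAChain m G H` means `H` is obtained from `G` by a finite sequence of
`m`-leaf support vertex additions (each applied at a vertex of degree at most `m-1`). -/
inductive LSVAChain (m : ℕ) : {α : Type} → SimpleGraph α → {β : Type} → SimpleGraph β → Prop
  | refl {α : Type} (G : SimpleGraph α) : LSVAChain m G G
  | step {α : Type} {G : SimpleGraph α} {β : Type} {H : SimpleGraph β} (v : β)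
      (hv : (H.neighborSet v).ncard ≤ m - 1) :
      LSVAChain m G H → LSVAChain m G (lsva H v m)

/-- The graph obtained from the complete graph `K_n` by attaching one pendant
vertex to each vertex in the set `A`. -/
def pendantKn (n : ℕ) (A : Finset (Fin n)) : SimpleGraph (Fin n ⊕ {a : Fin n // a ∈ A}) where
  Adj a b :=
    (∃ x y : Fin n, a = Sum.inl x ∧ b = Sum.inl y ∧ x ≠ y) ∨
    (∃ p : {a : Fin n // a ∈ A}, a = Sum.inl p.1 ∧ b = Sum.inr p) ∨
    (∃ p : {a : Fin n // a ∈ A}, a = Sum.inr p ∧ b = Sum.inl p.1)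
  symm := by
    constructor
    rintro a b (⟨x, y, rfl, rfl, h⟩ | ⟨p, rfl, rfl⟩ | ⟨p, rfl, rfl⟩)
    · exact Or.inl ⟨y, x, rfl, rfl, h.symm⟩
    · exact Or.inr (Or.inr ⟨p, rfl, rfl⟩)
    · exact Or.inr (Or.inl ⟨p, rfl, rfl⟩)
  loopless := by
    constructor
    rintro a (⟨x, y, rfl, h, hne⟩ | ⟨p, rfl, h⟩ | ⟨p, rfl, h⟩) <;> simp_all

/-- The graph obtained from a cycle `C_k` with vertices `v_1, …, v_k` (the `Sum.inl`
vertices) together with disjoint complete graphs `K_{n i}` (the `Sum.inr` vertices),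
where every vertex of the `i`-th complete graph is joined to both `v_i` and `v_{i+1}`
(indices mod `k`). -/
def cycleCliques (k : ℕ) (n : Fin k → ℕ) :
    SimpleGraph (Fin k ⊕ Σ i : Fin k, Fin (n i)) where
  Adj a b :=
    match a, b with
    | Sum.inl i, Sum.inl j =>
        i ≠ j ∧ ((j : ℕ) = ((i : ℕ) + 1) % k ∨ (i : ℕ) = ((j : ℕ) + 1) % k)
    | Sum.inl j, Sum.inr s => (j : ℕ) = (s.1 : ℕ) ∨ (j : ℕ) = ((s.1 : ℕ) + 1) % k
    | Sum.inr s, Sum.inl j => (j : ℕ) = (s.1 : ℕ) ∨ (j : ℕ) = ((s.1 : ℕ) + 1) % k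
    | Sum.inr s, Sum.inr t => s ≠ t ∧ s.1 = t.1
  symm := by
    constructor
    rintro (i | s) (j | t) h
    · exact ⟨Ne.symm h.1, h.2.symm⟩
    · exact h
    · exact h
    · exact ⟨Ne.symm h.1, h.2.symm⟩
  loopless := by
    constructor
    rintro (i | s) h
    · exact h.1 rfl
    · exact h.1 rfl


/-- If a set of vertices is nonempty and closed under adjacency in a connected
graph, then it is everything. -/
lemma reach_closed {V : Type*} {G : SimpleGraph V} (hconn : G.Connected) {X : Set V}
    (hne : X.Nonempty) (hcl : ∀ ⦃v⦄, v ∈ X → ∀ ⦃y⦄, G.Adj v y → y ∈ X) :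
    ∀ v, v ∈ X := by
  obtain ⟨x₀, hx₀⟩ := hne
  have key : ∀ {a b : V}, G.Walk a b → a ∈ X → b ∈ X := by
    intro a b w
    induction w with
    | nil => exact id
    | cons h p ih => exact fun ha => ih (hcl ha h)
  intro v
  obtain ⟨w⟩ := hconn.preconnected x₀ v
  exact key w hx₀

/-- For a connected claw-free graph with minimum degree at least one
and a minimum vertex cover `C`, there is a zero forcing set `S` with
`|S| = |C| = β(G)` and `|S ∩ C| ≥ |C| - 1`. -/
theorem stmt1 {V : Type*} [Fintype V] (G : SimpleGraph V)
    (hconn : G.Connected) (hclaw : ClawFree G)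
    (hdeg : ∀ v : V, 1 ≤ degSet G v)
    (C : Set V) (hC : IsVC G C) (hCmin : C.ncard = vcNum G) :
    ∃ S : Set V, IsZFS G S ∧ S.ncard = C.ncard ∧ C.ncard = vcNum G ∧
      C.ncard - 1 ≤ (S ∩ C).ncard := by
  classical
  -- two vertices outside the cover are never adjacent
  have hIindep : ∀ a b : V, a ∉ C → b ∉ C → ¬ G.Adj a b := by
    intro a b ha hb hab
    exact ((hC hab).elim ha hb)
  -- a cover vertex has at most two neighbors outside the cover (claw-freeness)
  have two_whites : ∀ c u x : V, G.Adj c u → G.Adj c x → u ∉ C → x ∉ C → u ≠ x →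
      ∀ w, G.Adj c w → w ∉ C → w = u ∨ w = x := by
    intro c u x hcu hcx hu hx hux w hcw hw
    by_contra hcon
    push_neg at hcon
    exact hclaw ⟨c, u, x, w, hcu, hcx, hcw, hux, Ne.symm hcon.1, Ne.symm hcon.2,
      hIindep u x hu hx, hIindep u w hu hw, hIindep x w hx hw⟩
  by_cases hZ : IsZFS G C
  · refine ⟨C, hZ, rfl, hCmin, ?_⟩
    rw [Set.inter_self]
    omega
  -- Case: C itself is not a zero forcing set
  simp only [IsZFS, not_forall] at hZ
  obtain ⟨v0, hv0⟩ := hZ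
  have hv0C : v0 ∉ C := fun h => hv0 (Forced.init v0 h)
  -- key structural fact: a cover vertex adjacent to an unforced white vertex has
  -- exactly two white neighbors, both unforced
  have key2 : ∀ c ∈ C, ∀ u : V, ¬ Forced G C u → G.Adj c u →
      ∃ x, x ∉ C ∧ ¬ Forced G C x ∧ x ≠ u ∧ G.Adj c x ∧
        ∀ w, G.Adj c w → w ∉ C → w = u ∨ w = x := by
    intro c hc u hFu hcu
    have hu : u ∉ C := fun h => hFu (Forced.init u h)
    by_cases hex : ∃ x, G.Adj c x ∧ x ∉ C ∧ x ≠ u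
    · obtain ⟨x, hcx, hx, hxu⟩ := hex
      have hFx : ¬ Forced G C x := by
        intro hFx
        refine hFu (Forced.force c u (Forced.init c hc) hcu ?_)
        intro y hy hyu
        by_cases hyC : y ∈ C
        · exact Forced.init y hyC
        · rcases two_whites c u x hcu hcx hu hx (Ne.symm hxu) y hy hyC with rfl | rfl
          · exact absurd rfl hyu
          · exact hFx
      exact ⟨x, hx, hFx, hxu, hcx,
        fun w hw hwC => two_whites c u x hcu hcx hu hx (Ne.symm hxu) w hw hwC⟩
    · exfalso
      push_neg at hex
      refine hFu (Forced.force c u (Forced.init c hc) hcu ?_)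
      intro y hy hyu
      by_cases hyC : y ∈ C
      · exact Forced.init y hyC
      · exact absurd (hex y hy hyC) hyu
  -- first closure argument: the unforced whites together with the cover vertices
  -- adjacent to them form an adjacency-closed set, hence all of V
  have hcl1 : ∀ ⦃v⦄,
      v ∈ {v : V | ¬ Forced G C v ∨ (v ∈ C ∧ ∃ u, ¬ Forced G C u ∧ G.Adj v u)} →
      ∀ ⦃y⦄, G.Adj v y →
      y ∈ {v : V | ¬ Forced G C v ∨ (v ∈ C ∧ ∃ u, ¬ Forced G C u ∧ G.Adj v u)} := by
    intro v hv y hadj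
    simp only [Set.mem_setOf_eq] at hv ⊢
    rcases hv with hFv | ⟨hvC, u, hFu, hvu⟩
    · have hvC : v ∉ C := fun h => hFv (Forced.init v h)
      have hyC : y ∈ C := (hC hadj).resolve_left hvC
      exact Or.inr ⟨hyC, v, hFv, hadj.symm⟩
    · obtain ⟨x, hxC, hFx, hxu, hvx, hall⟩ := key2 v hvC u hFu hvu
      have huC : u ∉ C := fun h => hFu (Forced.init u h)
      by_cases hyC : y ∈ C
      · refine Or.inr ⟨hyC, ?_⟩
        by_contra hcon
        push_neg at hcon
        exact hclaw ⟨v, u, x, y, hvu, hvx, hadj, Ne.symm hxu,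
          fun h => huC (h ▸ hyC), fun h => hxC (h ▸ hyC),
          hIindep u x huC hxC,
          fun h => hcon u hFu h.symm, fun h => hcon x hFx h.symm⟩
      · rcases hall y hadj hyC with rfl | rfl
        · exact Or.inl hFu
        · exact Or.inl hFx
  have hXuniv := reach_closed hconn ⟨v0, Or.inl hv0⟩ hcl1
  -- hence every cover vertex has an unforced white neighbor
  have hCU : ∀ c ∈ C, ∃ u, ¬ Forced G C u ∧ G.Adj c u := by
    intro c hc
    rcases hXuniv c with hF | ⟨_, hu⟩
    · exact absurd (Forced.init c hc) hF
    · exact hu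
  -- every cover vertex has exactly two white neighbors
  have hwhites : ∀ c ∈ C, ∃ u x : V, u ≠ x ∧ u ∉ C ∧ x ∉ C ∧ G.Adj c u ∧ G.Adj c x ∧
      ∀ w, G.Adj c w → w ∉ C → w = u ∨ w = x := by
    intro c hc
    obtain ⟨u, hFu, hcu⟩ := hCU c hc
    obtain ⟨x, hxC, hFx, hxu, hcx, hall⟩ := key2 c hc u hFu hcu
    exact ⟨u, x, Ne.symm hxu, fun h => hFu (Forced.init u h), hxC, hcu, hcx, hall⟩
  -- pick a neighbor c₀ of v0
  have hnb : (G.neighborSet v0).Nonempty := by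
    have h := hdeg v0
    simp only [degSet] at h
    exact Set.nonempty_of_ncard_ne_zero (by omega)
  obtain ⟨c₀, hc₀⟩ := hnb
  have hadj₀ : G.Adj v0 c₀ := hc₀
  have hc₀C : c₀ ∈ C := (hC hadj₀).resolve_left hv0C
  -- the swapped set
  set S : Set V := insert v0 (C \ {c₀}) with hSdef
  -- every cover vertex is forced from S
  have hFc : ∀ c ∈ C, Forced G S c := by
    intro c hc
    by_cases hcc : c = c₀
    · subst hcc
      refine Forced.force v0 c (Forced.init v0 (Set.mem_insert _ _)) hadj₀ ?_
      intro y hy hyne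
      have hyC : y ∈ C := (hC hy).resolve_left hv0C
      exact Forced.init y (Set.mem_insert_of_mem _ ⟨hyC, hyne⟩)
    · exact Forced.init c (Set.mem_insert_of_mem _ ⟨hc, hcc⟩)
  -- forcing along a cover vertex: if one of its two whites is forced, so is the other
  have hpush : ∀ y ∈ C, ∀ u x : V, G.Adj y u →
      (∀ w, G.Adj y w → w ∉ C → w = u ∨ w = x) → Forced G S x → Forced G S u := by
    intro y hy u x hyu hall hFx
    refine Forced.force y u (hFc y hy) hyu ?_
    intro w hw hwu
    by_cases hwC : w ∈ C
    · exact hFc w hwC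
    · rcases hall w hw hwC with rfl | rfl
      · exact absurd rfl hwu
      · exact hFx
  -- if one white neighbor of a cover vertex is unforced, all of them are
  have hboth : ∀ y ∈ C, ∀ v : V, G.Adj y v → v ∉ C → ¬ Forced G S v →
      ∀ w, G.Adj y w → w ∉ C → ¬ Forced G S w := by
    intro y hy v hyv hvC hFv w hyw hwC hFw
    have hvw : v ≠ w := fun h => hFv (h ▸ hFw)
    obtain ⟨u, x, hux, huC, hxC, hyu, hyx, hall⟩ := hwhites y hy
    have hall2 : ∀ w', G.Adj y w' → w' ∉ C → w' = v ∨ w' = w := by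
      intro w' h1 h2
      have h3 := hall w' h1 h2
      have h4 := hall v hyv hvC
      have h5 := hall w hyw hwC
      rcases h4 with rfl | rfl <;> rcases h5 with rfl | rfl <;> tauto
    exact hFv (hpush y hy v w hyv hall2 hFw)
  -- second closure argument: S is a zero forcing set
  have hZFS : IsZFS G S := by
    by_contra hns
    simp only [IsZFS, not_forall] at hns
    obtain ⟨b, hFb⟩ := hns
    have hbC : b ∉ C := fun h => hFb (hFc b h)
    have hcl2 : ∀ ⦃v⦄,
        v ∈ {v : V | (v ∉ C ∧ ¬ Forced G S v) ∨
          (v ∈ C ∧ ∀ w, G.Adj v w → w ∉ C → ¬ Forced G S w)} →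
        ∀ ⦃y⦄, G.Adj v y →
        y ∈ {v : V | (v ∉ C ∧ ¬ Forced G S v) ∨
          (v ∈ C ∧ ∀ w, G.Adj v w → w ∉ C → ¬ Forced G S w)} := by
      intro v hv y hadj
      simp only [Set.mem_setOf_eq] at hv ⊢
      rcases hv with ⟨hvC, hFv⟩ | ⟨hvC, hprop⟩
      · have hyC : y ∈ C := (hC hadj).resolve_left hvC
        exact Or.inr ⟨hyC, hboth y hyC v hadj.symm hvC hFv⟩
      · obtain ⟨u, x, hux, huC, hxC, hvu, hvx, hall⟩ := hwhites v hvC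
        by_cases hyC : y ∈ C
        · refine Or.inr ⟨hyC, ?_⟩
          have hyux : G.Adj y u ∨ G.Adj y x := by
            by_contra hcon
            push_neg at hcon
            exact hclaw ⟨v, u, x, y, hvu, hvx, hadj, hux,
              fun h => huC (h ▸ hyC), fun h => hxC (h ▸ hyC),
              hIindep u x huC hxC, fun h => hcon.1 h.symm, fun h => hcon.2 h.symm⟩
          rcases hyux with hyu | hyx
          · exact hboth y hyC u hyu huC (hprop u hvu huC)
          · exact hboth y hyC x hyx hxC (hprop x hvx hxC)
        · exact Or.inl ⟨hyC, hprop y hadj hyC⟩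
    have hX2 := reach_closed hconn ⟨b, Or.inl ⟨hbC, hFb⟩⟩ hcl2
    rcases hX2 v0 with ⟨_, hFv0⟩ | ⟨hv0C', _⟩
    · exact hFv0 (Forced.init v0 (Set.mem_insert _ _))
    · exact hv0C hv0C'
  -- cardinality bookkeeping
  have hd : (C \ {c₀}).ncard = C.ncard - 1 := Set.ncard_diff_singleton_of_mem hc₀C
  have hpos : 0 < C.ncard := (Set.ncard_pos C.toFinite).mpr ⟨c₀, hc₀C⟩
  have hnotin : v0 ∉ C \ {c₀} := fun h => hv0C h.1
  have hSc : S.ncard = (C \ {c₀}).ncard + 1 := Set.ncard_insert_of_notMem hnotin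
  have hSC : S ∩ C = C \ {c₀} := by
    ext w
    simp only [hSdef, Set.mem_inter_iff, Set.mem_insert_iff, Set.mem_diff,
      Set.mem_singleton_iff]
    constructor
    · rintro ⟨rfl | ⟨h1, h2⟩, h3⟩
      · exact absurd h3 hv0C
      · exact ⟨h1, h2⟩
    · rintro ⟨h1, h2⟩
      exact ⟨Or.inr ⟨h1, h2⟩, h1⟩
  refine ⟨S, hZFS, by omega, hCmin, ?_⟩
  rw [hSC, hd]

end ZFPaper
end

section
/- If G is a connected simple graph with maximum degree Δ ≥ 3, then the zero forcing number of G satisfies Z(G) ≤ (Δ − 2)·β(G) + 1. -/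
open SimpleGraph

namespace ZFPaper

variable {V : Type*} {W : Type*}

section Proof2

open Set

universe u

variable {V : Type*} {G : SimpleGraph V}

lemma walk_closed {T : Set V}
    (hT : ∀ x ∈ T, ∀ y, G.Adj x y → y ∈ T) :
    ∀ {a b : V}, G.Walk a b → a ∈ T → b ∈ T := by
  intro a b w
  induction w with
  | nil => exact id
  | cons h q ih => exact fun ha => ih (hT _ ha _ h)

lemma exists_pred_of_mem_support :
    ∀ {a b : V} (w : G.Walk a b) {x : V}, x ∈ w.support → x ≠ a →
      ∃ y ∈ w.support, G.Adj y x := by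
  intro a b w
  induction w with
  | nil =>
    intro x hx hxa
    simp only [SimpleGraph.Walk.support_nil, List.mem_singleton] at hx
    exact absurd hx hxa
  | @cons u v b h q ih =>
    intro x hx hxa
    rw [SimpleGraph.Walk.support_cons, List.mem_cons] at hx
    rcases hx with rfl | hx
    · exact absurd rfl hxa
    · by_cases hxv : x = v
      · exact ⟨u, by simp, hxv ▸ h⟩
      · obtain ⟨y, hy, hadj⟩ := ih hx hxv
        refine ⟨y, ?_, hadj⟩
        rw [SimpleGraph.Walk.support_cons]
        exact List.mem_cons_of_mem _ hy

lemma walk_reachable_induce {S : Set V} :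
    ∀ {a b : V} (w : G.Walk a b) (hS : ∀ x ∈ w.support, x ∈ S)
      (ha : a ∈ S) (hb : b ∈ S),
      (G.induce S).Reachable ⟨a, ha⟩ ⟨b, hb⟩ := by
  intro a b w
  induction w with
  | nil => exact fun _ _ _ => SimpleGraph.Reachable.refl _
  | @cons u v b h q ih =>
    intro hS ha hb
    have hv : v ∈ S := hS v (by simp)
    have hadj : (G.induce S).Adj ⟨u, ha⟩ ⟨v, hv⟩ := h
    exact hadj.reachable.trans (ih (fun x hx => hS x (by
      rw [SimpleGraph.Walk.support_cons]; exact List.mem_cons_of_mem _ hx)) hv hb)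

lemma exists_adj_of_ne_of_reachable {a b : V} (h : G.Reachable a b) (hne : a ≠ b) :
    ∃ y, G.Adj a y := by
  obtain ⟨w⟩ := h
  cases w with
  | nil => exact absurd rfl hne
  | cons h q => exact ⟨_, h⟩

lemma assemble {V : Type u} (G : SimpleGraph V) (c p0 : V) (P S : Set V)
    (hPnb : ∀ p ∈ P, G.neighborSet p = {c})
    (hS : ∀ x, x ∈ S ↔ (x ≠ c ∧ x ∉ P))
    (B' : Set ↥S) (hB' : IsZFS (G.induce S) B')
    (B : Set V) (hsub : ∀ b : ↥S, b ∈ B' → b.val ∈ B)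
    (hcF : Forced G B c)
    (hPB : ∀ p ∈ P, p ≠ p0 → p ∈ B) :
    IsZFS G B := by
  have hadj_of_P : ∀ p ∈ P, ∀ x, G.Adj p x → x = c := by
    intro p hp x hx
    have hmem : x ∈ G.neighborSet p := hx
    rwa [hPnb p hp, Set.mem_singleton_iff] at hmem
  have htrans : ∀ v : ↥S, Forced (G.induce S) B' v → Forced G B v.val := by
    intro v h
    induction h with
    | init v hv => exact Forced.init _ (hsub v hv)
    | force u w hu hadj hside ihu ihside =>
      refine Forced.force u.val w.val ihu hadj ?_
      intro x hx hne
      by_cases hxc : x = c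
      · exact hxc ▸ hcF
      by_cases hxP : x ∈ P
      · exact absurd (hadj_of_P x hxP u.val hx.symm) ((hS u.val).mp u.2).1
      · exact ihside ⟨x, (hS x).mpr ⟨hxc, hxP⟩⟩ hx (fun h => hne (congrArg Subtype.val h))
  intro v
  by_cases hvc : v = c
  · exact hvc ▸ hcF
  by_cases hvP : v ∈ P
  · by_cases hvp0 : v = p0
    · subst hvp0
      have hadjc : G.Adj c v := by
        have hmem : c ∈ G.neighborSet v := by
          rw [hPnb v hvP]; exact Set.mem_singleton c
        exact (SimpleGraph.mem_neighborSet G v c |>.mp hmem).symm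
      refine Forced.force c v hcF hadjc ?_
      intro x hx hne
      by_cases hxc : x = c
      · exact absurd (hxc ▸ hx) (G.loopless.irrefl c)
      by_cases hxP : x ∈ P
      · exact Forced.init _ (hPB x hxP hne)
      · exact htrans ⟨x, (hS x).mpr ⟨hxc, hxP⟩⟩ (hB' _)
    · exact Forced.init _ (hPB v hvP hvp0)
  · exact htrans ⟨v, (hS v).mpr ⟨hvc, hvP⟩⟩ (hB' _)

end Proof2

lemma key (m : ℕ) (hm : 3 ≤ m) :
    ∀ (n : ℕ) {V : Type u} [Fintype V] (G : SimpleGraph V), G.Connected →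
      (∀ v, degSet G v ≤ m) → ∀ C : Set V, IsVC G C → C.ncard ≤ n →
      ∃ B : Set V, IsZFS G B ∧ B.ncard ≤ (m - 2) * C.ncard + 1 := by
  intro n
  induction n with
  | zero =>
    intro V _ G hconn hdeg C hC hCn
    have hC0 : C = ∅ := (Set.ncard_eq_zero C.toFinite).mp (Nat.le_zero.mp hCn)
    subst hC0
    have hnoedge : ∀ u w : V, ¬ G.Adj u w := by
      intro u w h
      rcases hC h with h' | h' <;> exact h'
    refine ⟨Set.univ, fun v => Forced.init v trivial, ?_⟩
    have hsub : ∀ a b : V, a = b := by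
      intro a b
      obtain ⟨w⟩ := hconn.preconnected a b
      cases w with
      | nil => rfl
      | cons h q => exact absurd h (hnoedge _ _)
    have h1 : (Set.univ : Set V).ncard = 1 := by
      rw [Set.ncard_univ, Nat.card_eq_one_iff_unique]
      exact ⟨⟨hsub⟩, hconn.nonempty⟩
    rw [h1, Set.ncard_empty]
    omega
  | succ n ih =>
    intro V _ G hconn hdeg C hC hCn
    classical
    by_cases hsmall : C.ncard ≤ n
    · exact ih G hconn hdeg C hC hsmall
    have hCcard : C.ncard = n + 1 := le_antisymm hCn (by omega)
    have hCfin : C.Finite := C.toFinite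
    by_cases hred : ∃ x ∈ C, IsVC G (C \ {x})
    · obtain ⟨x, hx, hVC'⟩ := hred
      have hd : (C \ {x}).ncard = C.ncard - 1 := Set.ncard_diff_singleton_of_mem hx
      obtain ⟨B, hB1, hB2⟩ := ih G hconn hdeg _ hVC' (by omega)
      exact ⟨B, hB1, hB2.trans (Nat.add_le_add_right
        (Nat.mul_le_mul (le_refl (m - 2)) (by omega)) 1)⟩
    push_neg at hred
    have hout : ∀ x ∈ C, ∃ y, G.Adj x y ∧ y ∉ C := by
      intro x hx
      have h1 := hred x hx
      rw [IsVC] at h1; push_neg at h1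
      obtain ⟨a, b, hab, ha, hb⟩ := h1
      rcases hC hab with h | h
      · have hax : a = x := by
          by_contra hne; exact ha ⟨h, hne⟩
        subst hax
        refine ⟨b, hab, fun hbC => hb ⟨hbC, fun hbx => hab.ne hbx.symm⟩⟩
      · have hbx : b = x := by
          by_contra hne; exact hb ⟨h, hne⟩
        subst hbx
        refine ⟨a, hab.symm, fun haC => ha ⟨haC, fun hax => hab.ne hax⟩⟩
    have hallAdjEx : ∀ v w : V, v ≠ w → ∃ y, G.Adj v y :=
      fun v w hne => exists_adj_of_ne_of_reachable (hconn.preconnected v w) hne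
    by_cases hC1 : C.ncard = 1
    · -- star case
      obtain ⟨c, rfl⟩ := Set.ncard_eq_one.mp hC1
      have hstar : ∀ ⦃a b : V⦄, G.Adj a b → a = c ∨ b = c := fun a b h => hC h
      have hNc : ∀ x y : V, G.Adj x y → x ≠ c → y = c := by
        intro x y h hx
        rcases hstar h with h' | h'
        · exact absurd h' hx
        · exact h'
      have hallAdj : ∀ v, v ≠ c → G.Adj c v := by
        intro v hvc
        obtain ⟨y, hy⟩ := hallAdjEx v c hvc
        have hyc : y = c := hNc v y hy hvc
        exact (hyc ▸ hy).symm
      obtain ⟨w0, hw0, _⟩ := hout c rfl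
      have hw0c : w0 ≠ c := hw0.ne'
      by_cases h2 : ∃ w1, G.Adj c w1 ∧ w1 ≠ w0
      · obtain ⟨w1, hw1, hw10⟩ := h2
        refine ⟨G.neighborSet c \ {w0}, ?_, ?_⟩
        · have hcF : Forced G (G.neighborSet c \ {w0}) c :=
            Forced.force w1 c (Forced.init _ ⟨hw1, hw10⟩) hw1.symm
              (fun x hx hne => absurd (hNc w1 x hx hw1.ne') hne)
          intro v
          by_cases hvc : v = c
          · exact hvc ▸ hcF
          · have hadj := hallAdj v hvc
            by_cases hvw0 : v = w0
            · subst hvw0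
              exact Forced.force c v hcF hadj
                (fun x hx hne => Forced.init _ ⟨hx, hne⟩)
            · exact Forced.init _ ⟨hadj, hvw0⟩
        · rw [Set.ncard_singleton]
          have h1 : (G.neighborSet c \ {w0}).ncard = (G.neighborSet c).ncard - 1 :=
            Set.ncard_diff_singleton_of_mem hw0
          have h2 : (G.neighborSet c).ncard ≤ m := hdeg c
          omega
      · push_neg at h2
        refine ⟨{c}, ?_, ?_⟩
        · have hcF : Forced G {c} c := Forced.init _ rfl
          intro v
          by_cases hvc : v = c
          · exact hvc ▸ hcF
          · have hadj := hallAdj v hvc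
            have hv0 : v = w0 := h2 v hadj
            subst hv0
            exact Forced.force c v hcF hadj
              (fun x hx hne => absurd (h2 x hx) hne)
        · rw [Set.ncard_singleton]
          omega
    · -- main case: 2 ≤ C.ncard
      have hC2 : 2 ≤ C.ncard := by omega
      obtain ⟨r, hrC⟩ : C.Nonempty := Set.nonempty_of_ncard_ne_zero (by omega)
      obtain ⟨c, hcC, hcmax⟩ := Set.exists_max_image C (G.dist r) hCfin ⟨r, hrC⟩
      have hrc : r ≠ c := by
        intro h; subst h
        obtain ⟨c2, hc2⟩ := Set.nonempty_of_ncard_ne_zero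
          (s := C \ {r}) (by rw [Set.ncard_diff_singleton_of_mem hrC]; omega)
        have h0 : G.dist r c2 = 0 :=
          Nat.le_zero.mp (by simpa [SimpleGraph.dist_self] using hcmax c2 hc2.1)
        exact hc2.2 ((SimpleGraph.Reachable.dist_eq_zero_iff
          (hconn.preconnected r c2)).mp h0).symm
      set P : Set V := {x | G.Adj c x ∧ (G.neighborSet x).ncard = 1} with hPdef
      have hPnb : ∀ p ∈ P, G.neighborSet p = {c} := by
        intro p hp
        obtain ⟨a, ha⟩ := Set.ncard_eq_one.mp hp.2
        have hcp : c ∈ G.neighborSet p := hp.1.symm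
        rw [ha, Set.mem_singleton_iff] at hcp
        rw [ha, hcp]
      have hadj_of_P : ∀ p ∈ P, ∀ x, G.Adj p x → x = c := by
        intro p hp x hx
        have hmem : x ∈ G.neighborSet p := hx
        rwa [hPnb p hp, Set.mem_singleton_iff] at hmem
      have hPC : ∀ p ∈ P, p ∉ C := by
        intro p hp hpC
        obtain ⟨y, hy, hyC⟩ := hout p hpC
        exact hyC ((hadj_of_P p hp y hy) ▸ hcC)
      set S : Set V := {x | x ≠ c ∧ x ∉ P} with hSdef
      have hS : ∀ x, x ∈ S ↔ (x ≠ c ∧ x ∉ P) := fun x => Iff.rfl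
      have hrS : r ∈ S := ⟨hrc, fun hp => hPC r hp hrC⟩
      have hCwalk : ∀ v ∈ C, v ≠ c → ∃ w : G.Walk v r, ∀ x ∈ w.support, x ∈ S := by
        intro v hvC hvc
        obtain ⟨w, hw⟩ := (hconn.preconnected v r).exists_walk_length_eq_dist
        have hcsupp : c ∉ w.support := by
          intro hcs
          have h1 : G.dist v c ≤ (w.takeUntil c hcs).length := SimpleGraph.dist_le _
          have h2 : G.dist c r ≤ (w.dropUntil c hcs).length := SimpleGraph.dist_le _
          have h3 : (w.takeUntil c hcs).length + (w.dropUntil c hcs).length = w.length := by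
            rw [← SimpleGraph.Walk.length_append, SimpleGraph.Walk.take_spec]
          have h4 : 0 < G.dist v c :=
            (hconn.preconnected v c).pos_dist_of_ne hvc
          have h5 : G.dist r v ≤ G.dist r c := hcmax v hvC
          have h7 : G.dist c r = G.dist r c := SimpleGraph.dist_comm
          have h8 : G.dist r v = G.dist v r := SimpleGraph.dist_comm
          omega
        refine ⟨w, fun x hx => ⟨fun h => hcsupp (h ▸ hx), fun hxP => ?_⟩⟩
        have hxv : x ≠ v := by
          rintro rfl; exact hPC x hxP hvC
        obtain ⟨y, hy, hadj⟩ := exists_pred_of_mem_support w hx hxv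
        exact hcsupp ((hadj_of_P x hxP y hadj.symm) ▸ hy)
      have hreach : ∀ x (hx : x ∈ S), (G.induce S).Reachable ⟨x, hx⟩ ⟨r, hrS⟩ := by
        intro x hx
        by_cases hxC : x ∈ C
        · obtain ⟨w, hw⟩ := hCwalk x hxC hx.1
          exact walk_reachable_induce w hw hx hrS
        · have hxr : x ≠ r := by rintro rfl; exact hxC hrC
          by_cases hxz : ∃ z, G.Adj x z ∧ z ≠ c
          · obtain ⟨z, hz, hzc⟩ := hxz
            have hzC : z ∈ C := (hC hz).resolve_left hxC
            obtain ⟨w, hw⟩ := hCwalk z hzC hzc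
            refine walk_reachable_induce (SimpleGraph.Walk.cons hz w) ?_ hx hrS
            intro y hy
            rw [SimpleGraph.Walk.support_cons, List.mem_cons] at hy
            rcases hy with rfl | hy
            · exact hx
            · exact hw y hy
          · exfalso
            push_neg at hxz
            obtain ⟨y, hy⟩ := hallAdjEx x r hxr
            have hyc : y = c := hxz y hy
            apply hx.2
            refine ⟨(hyc ▸ hy).symm, ?_⟩
            have hNx : G.neighborSet x = {c} := by
              ext z
              simp only [SimpleGraph.mem_neighborSet, Set.mem_singleton_iff]
              exact ⟨fun h => hxz z h, fun h => h ▸ (hyc ▸ hy)⟩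
            rw [hNx, Set.ncard_singleton]
      obtain ⟨q, hqadj, hqP⟩ : ∃ q, G.Adj c q ∧ q ∉ P := by
        by_contra h
        push_neg at h
        have hclosed : ∀ x ∈ ({c} ∪ P : Set V), ∀ y, G.Adj x y → y ∈ ({c} ∪ P : Set V) := by
          intro x hx y hxy
          rcases hx with hx | hx
          · rw [Set.mem_singleton_iff] at hx
            exact Or.inr (h y (hx ▸ hxy))
          · exact Or.inl (Set.mem_singleton_iff.mpr (hadj_of_P x hx y hxy))
        obtain ⟨c2, hc2⟩ := Set.nonempty_of_ncard_ne_zero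
          (s := C \ {c}) (by rw [Set.ncard_diff_singleton_of_mem hcC]; omega)
        obtain ⟨w⟩ := hconn.preconnected c c2
        have hc2T := walk_closed hclosed w (Or.inl rfl)
        rcases hc2T with h' | h'
        · exact hc2.2 h'
        · exact hPC c2 h' hc2.1
      have hPle : P.ncard ≤ m - 2 + 1 := by
        have hsub : P ⊆ G.neighborSet c \ {q} :=
          fun p hp => ⟨hp.1, fun h => hqP (Set.mem_singleton_iff.mp h ▸ hp)⟩
        have h1 := Set.ncard_le_ncard hsub (Set.toFinite _)
        have h2 : (G.neighborSet c \ {q}).ncard = (G.neighborSet c).ncard - 1 :=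
          Set.ncard_diff_singleton_of_mem hqadj
        have h3 : (G.neighborSet c).ncard ≤ m := hdeg c
        omega
      haveI : Fintype ↥S := Fintype.ofFinite ↥S
      have hG'conn : (G.induce S).Connected := by
        rw [SimpleGraph.connected_iff]
        refine ⟨?_, ⟨⟨r, hrS⟩⟩⟩
        rintro ⟨a, ha⟩ ⟨b, hb⟩
        exact (hreach a ha).trans (hreach b hb).symm
      have hdeg' : ∀ v : ↥S, degSet (G.induce S) v ≤ m := by
        intro v
        show ((G.induce S).neighborSet v).ncard ≤ m
        have h1 : Subtype.val '' ((G.induce S).neighborSet v) ⊆ G.neighborSet v.val := by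
          rintro _ ⟨x, hx, rfl⟩
          exact hx
        calc ((G.induce S).neighborSet v).ncard
            = (Subtype.val '' ((G.induce S).neighborSet v)).ncard :=
              (Set.ncard_image_of_injective _ Subtype.val_injective).symm
          _ ≤ (G.neighborSet v.val).ncard := Set.ncard_le_ncard h1 (Set.toFinite _)
          _ ≤ m := hdeg v.val
      set C' : Set ↥S := {x : ↥S | x.val ∈ C} with hC'def
      have hC'vc : IsVC (G.induce S) C' := by
        intro a b hab
        rcases hC hab with h | h
        · exact Or.inl h
        · exact Or.inr h
      have hC'card : C'.ncard ≤ n := by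
        have h1 : Subtype.val '' C' ⊆ C \ {c} := by
          rintro _ ⟨x, hx, rfl⟩
          exact ⟨hx, fun h => x.2.1 (Set.mem_singleton_iff.mp h)⟩
        have h2 : (Subtype.val '' C').ncard = C'.ncard :=
          Set.ncard_image_of_injective _ Subtype.val_injective
        have h3 := Set.ncard_le_ncard h1 (Set.toFinite _)
        have h4 : (C \ {c}).ncard = C.ncard - 1 := Set.ncard_diff_singleton_of_mem hcC
        omega
      obtain ⟨B', hB'zfs, hB'card⟩ := ih (G.induce S) hG'conn hdeg' C' hC'vc hC'card
      have himgcard : (Subtype.val '' B').ncard = B'.ncard :=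
        Set.ncard_image_of_injective _ Subtype.val_injective
      have hmul : (m - 2) * C'.ncard ≤ (m - 2) * n := Nat.mul_le_mul (le_refl (m - 2)) hC'card
      have hfin : (m - 2) * (n + 1) = (m - 2) * n + (m - 2) := by ring
      rw [hCcard]
      by_cases hP2 : ∃ p0 ∈ P, ∃ p1 ∈ P, p1 ≠ p0
      · obtain ⟨p0, hp0P, p1, hp1P, hp10⟩ := hP2
        refine ⟨(Subtype.val '' B') ∪ (P \ {p0}), ?_, ?_⟩
        · have hp1c : G.Adj p1 c := by
            have hmem : c ∈ G.neighborSet p1 := by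
              rw [hPnb p1 hp1P]; exact Set.mem_singleton c
            exact hmem
          have hcF : Forced G ((Subtype.val '' B') ∪ (P \ {p0})) c := by
            refine Forced.force p1 c (Forced.init _ (Or.inr ⟨hp1P, hp10⟩)) hp1c ?_
            intro x hx hne
            exact absurd (hadj_of_P p1 hp1P x hx) hne
          exact assemble G c p0 P S hPnb hS B' hB'zfs _
            (fun b hb => Or.inl ⟨b, hb, rfl⟩) hcF
            (fun p hp hne => Or.inr ⟨hp, hne⟩)
        · have h1 := Set.ncard_union_le (Subtype.val '' B') (P \ {p0})
          have h3 : (P \ {p0}).ncard = P.ncard - 1 :=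
            Set.ncard_diff_singleton_of_mem hp0P
          have h4 : (P \ {p0}).ncard ≤ m - 2 := by omega
          calc ((Subtype.val '' B') ∪ (P \ {p0})).ncard
              ≤ B'.ncard + (P \ {p0}).ncard := by omega
            _ ≤ ((m - 2) * C'.ncard + 1) + (m - 2) := Nat.add_le_add hB'card h4
            _ ≤ ((m - 2) * n + 1) + (m - 2) :=
              Nat.add_le_add_right (Nat.add_le_add_right hmul 1) _
            _ = (m - 2) * (n + 1) + 1 := by rw [hfin]; ring
      · obtain ⟨p0, hPsub⟩ : ∃ p0, ∀ p ∈ P, p = p0 := by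
          push_neg at hP2
          by_cases hPn : P.Nonempty
          · obtain ⟨p, hp⟩ := hPn
            exact ⟨p, fun x hx => hP2 p hp x hx⟩
          · exact ⟨c, fun p hp => absurd ⟨p, hp⟩ hPn⟩
        refine ⟨(Subtype.val '' B') ∪ {c}, ?_, ?_⟩
        · exact assemble G c p0 P S hPnb hS B' hB'zfs _
            (fun b hb => Or.inl ⟨b, hb, rfl⟩) (Forced.init _ (Or.inr rfl))
            (fun p hp hne => absurd (hPsub p hp) hne)
        · have h1 := Set.ncard_union_le (Subtype.val '' B') ({c} : Set V)
          have h2 : ({c} : Set V).ncard = 1 := Set.ncard_singleton c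
          calc ((Subtype.val '' B') ∪ {c}).ncard
              ≤ B'.ncard + 1 := by omega
            _ ≤ ((m - 2) * C'.ncard + 1) + 1 := Nat.add_le_add_right hB'card 1
            _ ≤ ((m - 2) * n + 1) + 1 :=
              Nat.add_le_add_right (Nat.add_le_add_right hmul 1) _
            _ ≤ (m - 2) * (n + 1) + 1 := by
              rw [hfin]
              exact Nat.add_le_add_right (Nat.add_le_add_left (by omega) _) 1

/-- For a connected graph with maximum degree `Δ ≥ 3`,
`Z(G) ≤ (Δ - 2)·β(G) + 1`. -/
theorem stmt2 {V : Type*} [Fintype V] (G : SimpleGraph V)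
    (hconn : G.Connected) (hdelta : 3 ≤ maxDeg G) :
    zfNum G ≤ (maxDeg G - 2) * vcNum G + 1 := by
  obtain ⟨C, hC, hCcard⟩ : ∃ C : Set V, IsVC G C ∧ C.ncard = vcNum G :=
    Nat.sInf_mem (⟨(Set.univ : Set V).ncard, Set.univ,
      fun u w _ => Or.inl trivial, rfl⟩ :
      {m : ℕ | ∃ C : Set V, IsVC G C ∧ C.ncard = m}.Nonempty)
  have hdeg : ∀ v, degSet G v ≤ maxDeg G := by
    intro v
    exact le_csSup ((Set.finite_range (degSet G)).bddAbove) ⟨v, rfl⟩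
  obtain ⟨B, hB, hBcard⟩ := key (maxDeg G) hdelta C.ncard G hconn hdeg C hC le_rfl
  calc zfNum G ≤ B.ncard := Nat.sInf_le ⟨B, hB, rfl⟩
    _ ≤ (maxDeg G - 2) * C.ncard + 1 := hBcard
    _ = (maxDeg G - 2) * vcNum G + 1 := by rw [hCcard]

end ZFPaper
end

section
/- Let G be a finite simple graph with maximum degree Δ ≥ 3 satisfying Z(G) = (Δ − 2)·β(G) + 1, and let G' be any graph obtained from G by a (Δ − 1)-leaf support vertex addition. Then G' has maximum degree Δ and Z(G') = (Δ − 2)·β(G') + 1. -/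
open SimpleGraph

namespace ZFPaper

variable {V : Type*} {W : Type*}

section Helpers

variable {V : Type*}

lemma degSet_le_card [Fintype V] (G : SimpleGraph V) (u : V) :
    degSet G u ≤ Fintype.card V := by
  classical
  have := Set.ncard_le_ncard (Set.subset_univ (G.neighborSet u)) Set.finite_univ
  simpa [degSet, Set.ncard_univ, Nat.card_eq_fintype_card] using this

lemma bddAbove_degs [Fintype V] (G : SimpleGraph V) :
    BddAbove {d : ℕ | ∃ v, degSet G v = d} :=
  ⟨Fintype.card V, by rintro d ⟨u, rfl⟩; exact degSet_le_card G u⟩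

lemma degSet_le_maxDeg [Fintype V] (G : SimpleGraph V) (u : V) :
    degSet G u ≤ maxDeg G :=
  le_csSup (bddAbove_degs G) ⟨u, rfl⟩

lemma exists_degSet_eq_maxDeg [Fintype V] [Nonempty V] (G : SimpleGraph V) :
    ∃ u, degSet G u = maxDeg G := by
  have hne : {d : ℕ | ∃ v, degSet G v = d}.Nonempty :=
    ⟨degSet G (Classical.arbitrary V), Classical.arbitrary V, rfl⟩
  exact Nat.sSup_mem hne (bddAbove_degs G)

lemma exists_min_zfs [Fintype V] (G : SimpleGraph V) :
    ∃ B : Set V, IsZFS G B ∧ B.ncard = zfNum G := by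
  have h : zfNum G ∈ {m : ℕ | ∃ B : Set V, IsZFS G B ∧ B.ncard = m} :=
    Nat.sInf_mem ⟨(Set.univ : Set V).ncard, Set.univ,
      fun x => Forced.init x (Set.mem_univ x), rfl⟩
  obtain ⟨B, hB, hc⟩ := h
  exact ⟨B, hB, hc⟩

lemma exists_min_vc [Fintype V] (G : SimpleGraph V) :
    ∃ C : Set V, IsVC G C ∧ C.ncard = vcNum G := by
  have h : vcNum G ∈ {m : ℕ | ∃ C : Set V, IsVC G C ∧ C.ncard = m} :=
    Nat.sInf_mem ⟨(Set.univ : Set V).ncard, Set.univ,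
      fun u w _ => Or.inl (Set.mem_univ u), rfl⟩
  obtain ⟨C, hC, hc⟩ := h
  exact ⟨C, hC, hc⟩

lemma ncard_sum_decomp {W : Type*} [Fintype V] [Fintype W] (S : Set (V ⊕ W)) :
    S.ncard = (Sum.inl ⁻¹' S).ncard + (S ∩ Set.range Sum.inr).ncard := by
  classical
  have hS : S = Sum.inl '' (Sum.inl ⁻¹' S) ∪ (S ∩ Set.range Sum.inr) := by
    ext x
    cases x with
    | inl a => simp
    | inr b => simp
  have hdisj : Disjoint (Sum.inl '' (Sum.inl ⁻¹' S) : Set (V ⊕ W)) (S ∩ Set.range Sum.inr) := by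
    rw [Set.disjoint_left]
    rintro x ⟨a, _, rfl⟩ ⟨_, b, hb⟩
    exact Sum.inl_ne_inr hb.symm
  conv_lhs => rw [hS]
  rw [Set.ncard_union_eq hdisj (Set.toFinite _) (Set.toFinite _),
    Set.ncard_image_of_injective _ Sum.inl_injective]

section Lsva

variable (G : SimpleGraph V) (v : V) (k : ℕ)

lemma lsva_adj_iff {a b : V ⊕ Option (Fin k)} :
    (lsva G v k).Adj a b ↔
      (∃ x y, a = Sum.inl x ∧ b = Sum.inl y ∧ G.Adj x y) ∨
      (a = Sum.inl v ∧ b = Sum.inr none) ∨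
      (a = Sum.inr none ∧ b = Sum.inl v) ∨
      (∃ i : Fin k, a = Sum.inr none ∧ b = Sum.inr (some i)) ∨
      (∃ i : Fin k, a = Sum.inr (some i) ∧ b = Sum.inr none) := Iff.rfl

lemma lsva_adj_inl_inl {x y : V} (h : (lsva G v k).Adj (Sum.inl x) (Sum.inl y)) :
    G.Adj x y := by
  rcases (lsva_adj_iff G v k).1 h with ⟨a, b, ha, hb, hab⟩ | ⟨_, hb⟩ | ⟨ha, _⟩ |
    ⟨i, ha, _⟩ | ⟨i, ha, _⟩
  · cases ha; cases hb; exact hab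
  · exact absurd hb (by simp)
  · exact absurd ha (by simp)
  · exact absurd ha (by simp)
  · exact absurd ha (by simp)

lemma nbrSet_lsva_inl (u : V) :
    (lsva G v k).neighborSet (Sum.inl u) =
      Sum.inl '' G.neighborSet u ∪ {x | u = v ∧ x = Sum.inr none} := by
  ext x
  simp only [SimpleGraph.mem_neighborSet, Set.mem_union, Set.mem_image, Set.mem_setOf_eq]
  constructor
  · intro h
    rcases (lsva_adj_iff G v k).1 h with ⟨a, b, ha, hb, hab⟩ | ⟨ha, hb⟩ | ⟨ha, _⟩ |
      ⟨i, ha, _⟩ | ⟨i, ha, _⟩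
    · cases ha; exact Or.inl ⟨b, hab, hb.symm⟩
    · cases ha; exact Or.inr ⟨rfl, hb⟩
    · exact absurd ha (by simp)
    · exact absurd ha (by simp)
    · exact absurd ha (by simp)
  · rintro (⟨b, hab, rfl⟩ | ⟨huv, rfl⟩)
    · exact (lsva_adj_iff G v k).2 (Or.inl ⟨u, b, rfl, rfl, hab⟩)
    · subst huv; exact (lsva_adj_iff G u k).2 (Or.inr (Or.inl ⟨rfl, rfl⟩))

lemma nbrSet_lsva_w :
    (lsva G v k).neighborSet (Sum.inr none : V ⊕ Option (Fin k)) =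
      insert (Sum.inl v) (Set.range (fun i : Fin k => (Sum.inr (some i) : V ⊕ Option (Fin k)))) := by
  ext x
  simp only [SimpleGraph.mem_neighborSet, Set.mem_insert_iff, Set.mem_range]
  constructor
  · intro h
    rcases (lsva_adj_iff G v k).1 h with ⟨a, b, ha, _, _⟩ | ⟨ha, _⟩ | ⟨_, hb⟩ |
      ⟨i, _, hb⟩ | ⟨i, ha, _⟩
    · exact absurd ha (by simp)
    · exact absurd ha (by simp)
    · exact Or.inl hb
    · exact Or.inr ⟨i, hb.symm⟩
    · exact absurd ha (by simp)
  · rintro (rfl | ⟨i, rfl⟩)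
    · exact (lsva_adj_iff G v k).2 (Or.inr (Or.inr (Or.inl ⟨rfl, rfl⟩)))
    · exact (lsva_adj_iff G v k).2 (Or.inr (Or.inr (Or.inr (Or.inl ⟨i, rfl, rfl⟩))))

lemma nbrSet_lsva_leaf (i : Fin k) :
    (lsva G v k).neighborSet (Sum.inr (some i) : V ⊕ Option (Fin k)) =
      {(Sum.inr none : V ⊕ Option (Fin k))} := by
  ext x
  simp only [SimpleGraph.mem_neighborSet, Set.mem_singleton_iff]
  constructor
  · intro h
    rcases (lsva_adj_iff G v k).1 h with ⟨a, b, ha, _, _⟩ | ⟨ha, _⟩ | ⟨ha, _⟩ |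
      ⟨j, ha, _⟩ | ⟨j, ha, hb⟩
    · exact absurd ha (by simp)
    · exact absurd ha (by simp)
    · exact absurd ha (by simp)
    · exact absurd ha (by simp)
    · exact hb
  · rintro rfl
    exact (lsva_adj_iff G v k).2 (Or.inr (Or.inr (Or.inr (Or.inr ⟨i, rfl, rfl⟩))))

lemma degSet_lsva_inl_ne [Fintype V] (u : V) (hu : u ≠ v) :
    degSet (lsva G v k) (Sum.inl u) = degSet G u := by
  rw [degSet, nbrSet_lsva_inl]
  have : {x : V ⊕ Option (Fin k) | u = v ∧ x = Sum.inr none} = ∅ := by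
    ext x; simp [hu]
  rw [this, Set.union_empty, Set.ncard_image_of_injective _ Sum.inl_injective, degSet]

lemma degSet_lsva_inl_v [Fintype V] :
    degSet (lsva G v k) (Sum.inl v) = degSet G v + 1 := by
  rw [degSet, nbrSet_lsva_inl]
  have : {x : V ⊕ Option (Fin k) | v = v ∧ x = Sum.inr none} = {Sum.inr none} := by
    ext x; simp
  rw [this, Set.ncard_union_eq, Set.ncard_image_of_injective _ Sum.inl_injective,
    Set.ncard_singleton, degSet]
  rw [Set.disjoint_right]; rintro x rfl ⟨b, _, hb⟩; exact Sum.inl_ne_inr hb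

lemma degSet_lsva_w [Fintype V] :
    degSet (lsva G v k) (Sum.inr none : V ⊕ Option (Fin k)) = k + 1 := by
  rw [degSet, nbrSet_lsva_w, Set.ncard_insert_of_notMem]
  · have : Set.range (fun i : Fin k => (Sum.inr (some i) : V ⊕ Option (Fin k))) =
        (fun i : Fin k => (Sum.inr (some i) : V ⊕ Option (Fin k))) '' Set.univ := by
      rw [Set.image_univ]
    rw [this, Set.ncard_image_of_injective, Set.ncard_univ, Nat.card_eq_fintype_card,
      Fintype.card_fin]
    intro a b hab
    simpa using hab
  rintro ⟨i, hi⟩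
  exact Sum.inl_ne_inr hi.symm

lemma degSet_lsva_leaf [Fintype V] (i : Fin k) :
    degSet (lsva G v k) (Sum.inr (some i) : V ⊕ Option (Fin k)) = 1 := by
  rw [degSet, nbrSet_lsva_leaf, Set.ncard_singleton]

end Lsva

end Helpers


section Forcing

variable {V : Type*} (G : SimpleGraph V) (v : V) (k : ℕ)

/-- Pushing forcing from `G` into `lsva G v k`, when the support vertex is already blue. -/
lemma forced_push {B' : Set (V ⊕ Option (Fin k))}
    (hw : Forced (lsva G v k) B' (Sum.inr none))
    {B : Set V} (hBB : ∀ x ∈ B, Sum.inl x ∈ B') {u : V} (h : Forced G B u) :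
    Forced (lsva G v k) B' (Sum.inl u) := by
  induction h with
  | init z hz => exact Forced.init _ (hBB z hz)
  | force a b ha hadj hall iha ihall =>
    refine Forced.force (Sum.inl a) (Sum.inl b) iha ((lsva_adj_iff G v k).2 (Or.inl ⟨a, b, rfl, rfl, hadj⟩)) ?_
    intro x hx hne
    rcases (lsva_adj_iff G v k).1 hx with ⟨p, q, hp, hq, hpq⟩ | ⟨hp, hq⟩ | ⟨hp, _⟩ |
      ⟨i, hp, _⟩ | ⟨i, hp, _⟩
    · cases hp; subst hq
      exact ihall q hpq (fun hqb => hne (by rw [hqb]))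
    · subst hq; exact hw
    · exact absurd hp (by simp)
    · exact absurd hp (by simp)
    · exact absurd hp (by simp)

end Forcing

section More

variable {V : Type*} (G : SimpleGraph V) (v : V) (k : ℕ)

lemma forced_pull_A {B' : Set (V ⊕ Option (Fin k))} {x : V ⊕ Option (Fin k)}
    (h : Forced (lsva G v k) B' x) :
    ∀ y : V, x = Sum.inl y → Forced G (Sum.inl ⁻¹' B' ∪ {v}) y := by
  induction h with
  | init z hz =>
    rintro y rfl
    exact Forced.init y (Or.inl hz)
  | force a b ha hadj hall iha ihall =>
    rintro y rfl
    rcases a with a' | o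
    · have hGa : G.Adj a' y := lsva_adj_inl_inl G v k hadj
      refine Forced.force a' y (iha a' rfl) hGa ?_
      intro z hz hzy
      exact ihall (Sum.inl z) ((lsva_adj_iff G v k).2 (Or.inl ⟨a', z, rfl, rfl, hz⟩))
        (by simpa using hzy) z rfl
    · rcases o with _ | i
      · have hyv : y = v := by
          rcases (lsva_adj_iff G v k).1 hadj with ⟨p, q, hp, _, _⟩ | ⟨hp, _⟩ | ⟨_, hq⟩ |
            ⟨i, _, hq⟩ | ⟨i, hp, _⟩
          · exact absurd hp (by simp)
          · exact absurd hp (by simp)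
          · exact Sum.inl_injective hq
          · exact absurd hq (by simp)
          · exact absurd hp (by simp)
        exact Forced.init y (Or.inr hyv)
      · exfalso
        rcases (lsva_adj_iff G v k).1 hadj with ⟨p, q, hp, _, _⟩ | ⟨hp, _⟩ | ⟨hp, _⟩ |
          ⟨j, hp, _⟩ | ⟨j, _, hq⟩
        · exact absurd hp (by simp)
        · exact absurd hp (by simp)
        · exact absurd hp (by simp)
        · exact absurd hp (by simp)
        · exact absurd hq (by simp)

lemma forced_ne_two_leaves {B' : Set (V ⊕ Option (Fin k))} {l1 l2 : Fin k}
    (h12 : l1 ≠ l2) (h1 : Sum.inr (some l1) ∉ B') (h2 : Sum.inr (some l2) ∉ B')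
    {x} (h : Forced (lsva G v k) B' x) :
    x ≠ Sum.inr (some l1) ∧ x ≠ Sum.inr (some l2) := by
  induction h with
  | init z hz =>
    constructor
    · rintro rfl; exact h1 hz
    · rintro rfl; exact h2 hz
  | force a b ha hadj hall iha ihall =>
    have haw : ∀ i : Fin k, b = Sum.inr (some i) → a = Sum.inr none := by
      rintro i rfl
      rcases (lsva_adj_iff G v k).1 hadj with ⟨p, q, _, hq, _⟩ | ⟨_, hq⟩ | ⟨hp, _⟩ |
        ⟨j, hp, _⟩ | ⟨j, _, hq⟩
      · exact absurd hq (by simp)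
      · exact absurd hq (by simp)
      · exact hp
      · exact hp
      · exact absurd hq (by simp)
    constructor
    · rintro rfl
      have ha' := haw l1 rfl
      subst ha'
      exact (ihall (Sum.inr (some l2))
        ((lsva_adj_iff G v k).2 (Or.inr (Or.inr (Or.inr (Or.inl ⟨l2, rfl, rfl⟩)))))
        (by simp [h12.symm])).2 rfl
    · rintro rfl
      have ha' := haw l2 rfl
      subst ha'
      exact (ihall (Sum.inr (some l1))
        ((lsva_adj_iff G v k).2 (Or.inr (Or.inr (Or.inr (Or.inl ⟨l1, rfl, rfl⟩)))))
        (by simp [h12])).1 rfl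

lemma forced_pull_B {B' : Set (V ⊕ Option (Fin k))} {l : Fin k}
    (hl : Sum.inr (some l) ∉ B') {x} (h : Forced (lsva G v k) B' x) :
    (∀ y : V, x = Sum.inl y → Forced G (Sum.inl ⁻¹' B') y) ∧
    (∀ i : Fin k, x = Sum.inr (some i) → (x ∈ B' ∨ Forced G (Sum.inl ⁻¹' B') v)) := by
  induction h with
  | init z hz =>
    constructor
    · rintro y rfl; exact Forced.init y hz
    · rintro i rfl; exact Or.inl hz
  | force a b ha hadj hall iha ihall =>
    constructor
    · rintro y rfl
      rcases a with a' | o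
      · have hGa : G.Adj a' y := lsva_adj_inl_inl G v k hadj
        refine Forced.force a' y (iha.1 a' rfl) hGa ?_
        intro z hz hzy
        exact (ihall (Sum.inl z) ((lsva_adj_iff G v k).2 (Or.inl ⟨a', z, rfl, rfl, hz⟩))
          (by simpa using hzy)).1 z rfl
      · rcases o with _ | i
        · have hyv : y = v := by
            rcases (lsva_adj_iff G v k).1 hadj with ⟨p, q, hp, _, _⟩ | ⟨hp, _⟩ | ⟨_, hq⟩ |
              ⟨i, _, hq⟩ | ⟨i, hp, _⟩
            · exact absurd hp (by simp)
            · exact absurd hp (by simp)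
            · exact Sum.inl_injective hq
            · exact absurd hq (by simp)
            · exact absurd hp (by simp)
          rw [hyv]
          have hP := (ihall (Sum.inr (some l))
            ((lsva_adj_iff G v k).2 (Or.inr (Or.inr (Or.inr (Or.inl ⟨l, rfl, rfl⟩)))))
            (by simp)).2 l rfl
          rcases hP with hP | hP
          · exact absurd hP hl
          · exact hP
        · exfalso
          rcases (lsva_adj_iff G v k).1 hadj with ⟨p, q, hp, _, _⟩ | ⟨hp, _⟩ | ⟨hp, _⟩ |
            ⟨j, hp, _⟩ | ⟨j, _, hq⟩
          · exact absurd hp (by simp)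
          · exact absurd hp (by simp)
          · exact absurd hp (by simp)
          · exact absurd hp (by simp)
          · exact absurd hq (by simp)
    · rintro i rfl
      have haw : a = Sum.inr none := by
        rcases (lsva_adj_iff G v k).1 hadj with ⟨p, q, _, hq, _⟩ | ⟨_, hq⟩ | ⟨hp, _⟩ |
          ⟨j, hp, _⟩ | ⟨j, _, hq⟩
        · exact absurd hq (by simp)
        · exact absurd hq (by simp)
        · exact hp
        · exact hp
        · exact absurd hq (by simp)
      subst haw
      refine Or.inr ?_
      exact (ihall (Sum.inl v)
        ((lsva_adj_iff G v k).2 (Or.inr (Or.inr (Or.inl ⟨rfl, rfl⟩))))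
        (by simp)).1 v rfl

lemma zf_lower [Fintype V] (hk : 2 ≤ k) {B' : Set (V ⊕ Option (Fin k))}
    (hB' : IsZFS (lsva G v k) B') :
    zfNum G + (k - 1) ≤ B'.ncard := by
  classical
  rw [ncard_sum_decomp]
  have hmiss : {i : Fin k | Sum.inr (some i) ∉ B'}.ncard ≤ 1 := by
    rw [Set.ncard_le_one_iff (Set.toFinite _)]
    intro i j hi hj
    by_contra hij
    exact (forced_ne_two_leaves G v k hij hi hj (hB' (Sum.inr (some i)))).1 rfl
  have hcompl := Set.ncard_add_ncard_compl {i : Fin k | Sum.inr (some i) ∈ B'}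
    (Set.toFinite _) (Set.toFinite _)
  have hceq : ({i : Fin k | Sum.inr (some i) ∈ B'}ᶜ : Set (Fin k)) =
      {i : Fin k | Sum.inr (some i) ∉ B'} := rfl
  rw [hceq, Nat.card_eq_fintype_card, Fintype.card_fin] at hcompl
  have hin : k - 1 ≤ {i : Fin k | Sum.inr (some i) ∈ B'}.ncard := by omega
  have hsubR : (fun i : Fin k => (Sum.inr (some i) : V ⊕ Option (Fin k))) ''
      {i : Fin k | Sum.inr (some i) ∈ B'} ⊆ B' ∩ Set.range Sum.inr := by
    rintro x ⟨i, hi, rfl⟩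
    exact ⟨hi, some i, rfl⟩
  have hR : k - 1 ≤ (B' ∩ Set.range Sum.inr).ncard := by
    calc k - 1 ≤ {i : Fin k | Sum.inr (some i) ∈ B'}.ncard := hin
    _ = ((fun i : Fin k => (Sum.inr (some i) : V ⊕ Option (Fin k))) ''
        {i : Fin k | Sum.inr (some i) ∈ B'}).ncard := by
        rw [Set.ncard_image_of_injective]
        intro a b hab; simpa using hab
    _ ≤ _ := Set.ncard_le_ncard hsubR (Set.toFinite _)
  by_cases hcase : ∀ i : Fin k, Sum.inr (some i) ∈ B'
  · -- all leaves blue: R has ncard ≥ k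
    have hRk : k ≤ (B' ∩ Set.range Sum.inr).ncard := by
      have hall : {i : Fin k | Sum.inr (some i) ∈ B'} = Set.univ := by
        ext i; simpa using hcase i
      calc k = {i : Fin k | Sum.inr (some i) ∈ B'}.ncard := by
            rw [hall, Set.ncard_univ, Nat.card_eq_fintype_card, Fintype.card_fin]
      _ = ((fun i : Fin k => (Sum.inr (some i) : V ⊕ Option (Fin k))) ''
          {i : Fin k | Sum.inr (some i) ∈ B'}).ncard := by
          rw [Set.ncard_image_of_injective]
          intro a b hab; simpa using hab
      _ ≤ _ := Set.ncard_le_ncard hsubR (Set.toFinite _)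
    have hZle : zfNum G ≤ (Sum.inl ⁻¹' B' ∪ {v}).ncard :=
      Nat.sInf_le ⟨_, fun y => forced_pull_A G v k (hB' (Sum.inl y)) y rfl, rfl⟩
    have hle : (Sum.inl ⁻¹' B' ∪ {v}).ncard ≤ (Sum.inl ⁻¹' B').ncard + 1 := by
      calc (Sum.inl ⁻¹' B' ∪ {v}).ncard ≤ (Sum.inl ⁻¹' B').ncard + ({v} : Set V).ncard :=
        Set.ncard_union_le _ _
      _ = (Sum.inl ⁻¹' B').ncard + 1 := by rw [Set.ncard_singleton]
    omega
  · push_neg at hcase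
    obtain ⟨l, hl⟩ := hcase
    have hZle : zfNum G ≤ (Sum.inl ⁻¹' B').ncard :=
      Nat.sInf_le ⟨_, fun y => (forced_pull_B G v k hl (hB' (Sum.inl y))).1 y rfl, rfl⟩
    omega

lemma zf_upper [Fintype V] (hk : 2 ≤ k) (hZFSG : ∃ B : Set V, IsZFS G B ∧ B.ncard = zfNum G) :
    zfNum (lsva G v k) ≤ zfNum G + (k - 1) := by
  classical
  obtain ⟨B, hB, hBc⟩ := hZFSG
  have h0 : 0 < k := by omega
  have h1 : 1 < k := by omega
  set i0 : Fin k := ⟨0, h0⟩ with hi0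
  set i1 : Fin k := ⟨1, h1⟩ with hi1
  set L : Set (V ⊕ Option (Fin k)) :=
    (fun i : Fin k => (Sum.inr (some i) : V ⊕ Option (Fin k))) '' {i | i ≠ i0} with hL
  set B' : Set (V ⊕ Option (Fin k)) := Sum.inl '' B ∪ L with hB'
  have hmemL : ∀ i : Fin k, i ≠ i0 → (Sum.inr (some i) : V ⊕ Option (Fin k)) ∈ B' :=
    fun i hi => Or.inr ⟨i, hi, rfl⟩
  have hw : Forced (lsva G v k) B' (Sum.inr none) := by
    refine Forced.force (Sum.inr (some i1)) (Sum.inr none)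
      (Forced.init _ (hmemL i1 (by simp [hi0, hi1, Fin.ext_iff])))
      ((lsva_adj_iff G v k).2 (Or.inr (Or.inr (Or.inr (Or.inr ⟨i1, rfl, rfl⟩))))) ?_
    intro x hx hne
    exfalso
    apply hne
    rcases (lsva_adj_iff G v k).1 hx with ⟨p, q, hp, _, _⟩ | ⟨hp, _⟩ | ⟨hp, _⟩ |
      ⟨j, hp, _⟩ | ⟨j, _, hq⟩
    · exact absurd hp (by simp)
    · exact absurd hp (by simp)
    · exact absurd hp (by simp)
    · exact absurd hp (by simp)
    · exact hq
  have hpush : ∀ u : V, Forced (lsva G v k) B' (Sum.inl u) :=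
    fun u => forced_push G v k hw (fun x hx => Or.inl ⟨x, hx, rfl⟩) (hB u)
  have hZFS : IsZFS (lsva G v k) B' := by
    intro x
    rcases x with u | (_ | i)
    · exact hpush u
    · exact hw
    · by_cases hi : i = i0
      · subst hi
        refine Forced.force (Sum.inr none) (Sum.inr (some i0)) hw
          ((lsva_adj_iff G v k).2 (Or.inr (Or.inr (Or.inr (Or.inl ⟨i0, rfl, rfl⟩))))) ?_
        intro x hx hne
        rcases (lsva_adj_iff G v k).1 hx with ⟨p, q, hp, _, _⟩ | ⟨hp, _⟩ | ⟨_, hq⟩ |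
          ⟨j, _, hq⟩ | ⟨j, hp, _⟩
        · exact absurd hp (by simp)
        · exact absurd hp (by simp)
        · subst hq; exact hpush v
        · subst hq
          refine Forced.init _ (hmemL j ?_)
          rintro rfl
          exact hne rfl
        · exact absurd hp (by simp)
      · exact Forced.init _ (hmemL i hi)
  have hLcard : L.ncard = k - 1 := by
    rw [hL, Set.ncard_image_of_injective _ (by intro a b hab; simpa using hab)]
    have hcompl := Set.ncard_add_ncard_compl ({i0} : Set (Fin k))
      (Set.toFinite _) (Set.toFinite _)
    have hceq : (({i0} : Set (Fin k))ᶜ : Set (Fin k)) = {i : Fin k | i ≠ i0} := rfl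
    rw [hceq, Nat.card_eq_fintype_card, Fintype.card_fin, Set.ncard_singleton] at hcompl
    omega
  have hcard : B'.ncard = zfNum G + (k - 1) := by
    rw [hB', Set.ncard_union_eq ?_ (Set.toFinite _) (Set.toFinite _),
      Set.ncard_image_of_injective _ Sum.inl_injective, hBc, hLcard]
    rw [Set.disjoint_left]
    rintro x ⟨a, _, rfl⟩ ⟨i, _, hi⟩
    exact Sum.inl_ne_inr hi.symm
  exact Nat.sInf_le ⟨B', hZFS, hcard⟩

lemma vc_value [Fintype V] (hk : 0 < k) :
    vcNum (lsva G v k) = vcNum G + 1 := by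
  classical
  obtain ⟨C, hC, hCc⟩ := exists_min_vc G
  apply le_antisymm
  · refine Nat.sInf_le ⟨insert (Sum.inr none) (Sum.inl '' C), ?_, ?_⟩
    · rintro a b hab
      rcases (lsva_adj_iff G v k).1 hab with ⟨x, y, rfl, rfl, hxy⟩ | ⟨rfl, rfl⟩ |
        ⟨rfl, rfl⟩ | ⟨i, rfl, rfl⟩ | ⟨i, rfl, rfl⟩
      · rcases hC hxy with h | h
        · exact Or.inl (Set.mem_insert_of_mem _ ⟨x, h, rfl⟩)
        · exact Or.inr (Set.mem_insert_of_mem _ ⟨y, h, rfl⟩)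
      · exact Or.inr (Set.mem_insert _ _)
      · exact Or.inl (Set.mem_insert _ _)
      · exact Or.inl (Set.mem_insert _ _)
      · exact Or.inr (Set.mem_insert _ _)
    · rw [Set.ncard_insert_of_notMem (by rintro ⟨x, _, hx⟩; exact Sum.inl_ne_inr hx)
        (Set.toFinite _), Set.ncard_image_of_injective _ Sum.inl_injective, hCc]
  · refine le_csInf ⟨(Set.univ : Set (V ⊕ Option (Fin k))).ncard, Set.univ,
      fun a b _ => Or.inl (Set.mem_univ a), rfl⟩ ?_
    rintro m ⟨C', hC', rfl⟩
    rw [ncard_sum_decomp]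
    have h1 : vcNum G ≤ (Sum.inl ⁻¹' C').ncard := by
      refine Nat.sInf_le ⟨_, ?_, rfl⟩
      intro a b hab
      exact hC' ((lsva_adj_iff G v k).2 (Or.inl ⟨a, b, rfl, rfl, hab⟩))
    have h2 : 0 < (C' ∩ Set.range Sum.inr).ncard := by
      have hx := hC' ((lsva_adj_iff G v k).2
        (Or.inr (Or.inr (Or.inr (Or.inl ⟨⟨0, hk⟩, rfl, rfl⟩)))))
      rw [Set.ncard_pos (Set.toFinite _)]
      rcases hx with hx | hx
      · exact ⟨_, hx, none, rfl⟩
      · exact ⟨_, hx, some ⟨0, hk⟩, rfl⟩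
    omega

end More


lemma maxDeg_lsva_eq {V : Type*} [Fintype V] (G : SimpleGraph V) (v : V) (k : ℕ)
    (hd3 : 3 ≤ maxDeg G) (hk : k = maxDeg G - 1)
    (hvdeg : degSet G v ≤ maxDeg G - 2) :
    maxDeg (lsva G v k) = maxDeg G := by
  classical
  apply le_antisymm
  · have hne : {d : ℕ | ∃ x, degSet (lsva G v k) x = d}.Nonempty :=
      ⟨degSet (lsva G v k) (Sum.inr none), Sum.inr none, rfl⟩
    apply csSup_le hne
    rintro b ⟨x, rfl⟩
    rcases x with u | (_ | i)
    · by_cases hu : u = v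
      · subst hu
        rw [degSet_lsva_inl_v]
        omega
      · rw [degSet_lsva_inl_ne G v k u hu]
        exact degSet_le_maxDeg G u
    · rw [degSet_lsva_w]
      omega
    · rw [degSet_lsva_leaf]
      omega
  · have h := degSet_le_maxDeg (lsva G v k) (Sum.inr none)
    rw [degSet_lsva_w] at h
    omega

/-- If `Δ(G) ≥ 3`, `Z(G) = (Δ - 2)·β(G) + 1`, and `G'` is obtained from `G`
by a `(Δ - 1)`-leaf support vertex addition, then `Δ(G') = Δ(G)` and
`Z(G') = (Δ(G') - 2)·β(G') + 1`. -/
theorem stmt7 {V : Type*} [Fintype V] (G : SimpleGraph V)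
    (hdelta : 3 ≤ maxDeg G)
    (hZ : zfNum G = (maxDeg G - 2) * vcNum G + 1)
    (v : V) (hv : degSet G v ≤ (maxDeg G - 1) - 1) :
    maxDeg (lsva G v (maxDeg G - 1)) = maxDeg G ∧
    zfNum (lsva G v (maxDeg G - 1)) =
      (maxDeg (lsva G v (maxDeg G - 1)) - 2) * vcNum (lsva G v (maxDeg G - 1)) + 1 := by
  classical
  set k := maxDeg G - 1 with hk
  have hk2 : 2 ≤ k := by omega
  have hv' : degSet G v ≤ maxDeg G - 2 := by omega
  have hmax : maxDeg (lsva G v k) = maxDeg G := maxDeg_lsva_eq G v k hdelta hk hv'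
  have hvc : vcNum (lsva G v k) = vcNum G + 1 := vc_value G v k (by omega)
  have hzf : zfNum (lsva G v k) = zfNum G + (k - 1) := by
    apply le_antisymm (zf_upper G v k hk2 (exists_min_zfs G))
    refine le_csInf ⟨(Set.univ : Set (V ⊕ Option (Fin k))).ncard, Set.univ,
      fun x => Forced.init x (Set.mem_univ x), rfl⟩ ?_
    rintro m ⟨B', hB', rfl⟩
    exact zf_lower G v k hk2 hB'
  refine ⟨hmax, ?_⟩
  rw [hzf, hmax, hvc, hZ, Nat.mul_add, Nat.mul_one]
  omega

end ZFPaper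
end

section
/- Let k ≥ 3, let C_k be a cycle with vertices v_1, …, v_k, and let G be the graph obtained by taking disjoint complete graphs K_{n_1}, …, K_{n_k} with each n_i ≥ 1 and, for each i = 1, …, k, joining every vertex of K_{n_i} to both v_i and v_{i+1} (indices modulo k). Then the independence number of G satisfies α(G) = k. -/
open SimpleGraph

namespace ZFPaper

variable {V : Type*} {W : Type*}

/-- For `k ≥ 3` and cliques of sizes `n i ≥ 1` attached along a cycle `C_k`,
the independence number of the resulting graph is `k`. -/
theorem stmt14 (k : ℕ) (hk : 3 ≤ k) (n : Fin k → ℕ) (hn : ∀ i, 1 ≤ n i) :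
    indepNum (cycleCliques k n) = k := by
  classical
  have hk0 : 0 < k := by omega
  set V := (Fin k ⊕ Σ i : Fin k, Fin (n i))
  -- the projection map
  let f : V → Fin k := fun v => match v with
    | Sum.inl i => i
    | Sum.inr s => s.1
  -- any independent set has ncard ≤ k
  have hbound : ∀ m ∈ {m : ℕ | ∃ S : Set V, IsIndep (cycleCliques k n) S ∧ S.ncard = m},
      m ≤ k := by
    rintro m ⟨S, hS, rfl⟩
    have hinj : Set.InjOn f S := by
      rintro (i | s) hu (j | t) hw hft
      · simp only [f] at hft; exact congrArg Sum.inl hft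
      · exfalso
        apply hS hu hw
        simp only [f] at hft
        exact Or.inl (congrArg Fin.val hft)
      · exfalso
        apply hS hu hw
        simp only [f] at hft
        exact Or.inl (congrArg Fin.val hft.symm)
      · simp only [f] at hft
        by_contra hne
        exact hS hu hw ⟨fun h => hne (congrArg Sum.inr h), hft⟩
    calc S.ncard = (f '' S).ncard := (Set.ncard_image_of_injOn hinj).symm
      _ ≤ (Set.univ : Set (Fin k)).ncard := Set.ncard_le_ncard (Set.subset_univ _)
        Set.finite_univ
      _ = k := by simp [Set.ncard_univ]
  -- the independent set of size k
  let g : Fin k → V := fun i => Sum.inr ⟨i, ⟨0, hn i⟩⟩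
  have hginj : Function.Injective g := by
    intro i j h
    simpa [g] using congrArg f h
  have hmem : k ∈ {m : ℕ | ∃ S : Set V, IsIndep (cycleCliques k n) S ∧ S.ncard = m} := by
    refine ⟨Set.range g, ?_, ?_⟩
    · rintro u ⟨i, rfl⟩ w ⟨j, rfl⟩ hadj
      have h1 : (⟨i, ⟨0, hn i⟩⟩ : Σ i : Fin k, Fin (n i)).1 =
          (⟨j, ⟨0, hn j⟩⟩ : Σ i : Fin k, Fin (n i)).1 := hadj.2
      have : i = j := h1
      subst this
      exact hadj.1 rfl
    · rw [Set.ncard_eq_toFinset_card']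
      simp [Set.toFinset_range, Finset.card_image_of_injective _ hginj]
  have hbdd : BddAbove {m : ℕ | ∃ S : Set V, IsIndep (cycleCliques k n) S ∧ S.ncard = m} :=
    ⟨k, fun m hm => hbound m hm⟩
  exact le_antisymm (csSup_le ⟨k, hmem⟩ hbound) (le_csSup hbdd hmem)

end ZFPaper
end

section
/- Let k ≥ 3 and let T be any graph obtained from the star K_{1,k} by applying a finite sequence of (k − 1)-leaf support vertex additions. Then T has maximum degree k and satisfies Z(T) = (k − 2)·β(T) + 1; that is, every graph in this family attains equality in the bound Z(G) ≤ (Δ − 2)·β(G) + 1. -/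
open SimpleGraph

namespace ZFPaper

variable {V : Type*} {W : Type*}

section AuxBasic

variable {α : Type} {γ : Type}

lemma isZFS_univ (G : SimpleGraph α) : IsZFS G Set.univ := fun v => Forced.init v trivial

lemma zfNum_le {G : SimpleGraph α} {B : Set α} (hB : IsZFS G B) : zfNum G ≤ B.ncard :=
  Nat.sInf_le ⟨B, hB, rfl⟩

lemma exists_zfs_min (G : SimpleGraph α) : ∃ B, IsZFS G B ∧ B.ncard = zfNum G := by
  have h : zfNum G ∈ {m : ℕ | ∃ B : Set α, IsZFS G B ∧ B.ncard = m} :=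
    Nat.sInf_mem ⟨(Set.univ : Set α).ncard, ⟨_, isZFS_univ G, rfl⟩⟩
  exact h

lemma isVC_univ (G : SimpleGraph α) : IsVC G Set.univ := fun _ _ _ => Or.inl trivial

lemma vcNum_le {G : SimpleGraph α} {C : Set α} (hC : IsVC G C) : vcNum G ≤ C.ncard :=
  Nat.sInf_le ⟨C, hC, rfl⟩

lemma exists_vc_min (G : SimpleGraph α) : ∃ C, IsVC G C ∧ C.ncard = vcNum G := by
  have h : vcNum G ∈ {m : ℕ | ∃ C : Set α, IsVC G C ∧ C.ncard = m} :=
    Nat.sInf_mem ⟨(Set.univ : Set α).ncard, ⟨_, isVC_univ G, rfl⟩⟩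
  exact h

lemma ncard_sum [Finite α] [Finite γ] (B : Set (α ⊕ γ)) :
    B.ncard = (Sum.inl ⁻¹' B).ncard + (Sum.inr ⁻¹' B).ncard := by
  have hB : B = Sum.inl '' (Sum.inl ⁻¹' B) ∪ Sum.inr '' (Sum.inr ⁻¹' B) := by
    ext (x | y) <;> simp
  nth_rewrite 1 [hB]
  rw [Set.ncard_union_eq (by rw [Set.disjoint_iff]; rintro z ⟨⟨x, _, rfl⟩, ⟨y, _, h⟩⟩; simp at h)
    (Set.toFinite _) (Set.toFinite _),
    Set.ncard_image_of_injective _ Sum.inl_injective,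
    Set.ncard_image_of_injective _ Sum.inr_injective]

lemma compl_subsingleton_ncard {n : ℕ} (S : Set (Fin n))
    (h : ∀ i j : Fin n, i ∉ S → j ∉ S → i = j) : n - 1 ≤ S.ncard := by
  have h1 : Sᶜ.ncard ≤ 1 := by
    rw [Set.ncard_le_one_iff_eq]
    rcases Set.eq_empty_or_nonempty Sᶜ with he | ⟨x, hx⟩
    · exact Or.inl he
    · exact Or.inr ⟨x, Set.eq_singleton_iff_unique_mem.2 ⟨hx, fun y hy => h y x hy hx⟩⟩
  have h2 : S.ncard + Sᶜ.ncard = n := by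
    rw [Set.ncard_add_ncard_compl]; simp
  omega

/-- If two distinct vertices both have `c` as their unique neighbor and neither is in `B`,
then neither can ever be forced. -/
lemma no_two_leaves {G : SimpleGraph α} {B : Set α} {c l1 l2 : α}
    (h1 : ∀ u, G.Adj u l1 → u = c) (h2 : ∀ u, G.Adj u l2 → u = c)
    (hne : l1 ≠ l2) (ha1 : G.Adj c l1) (ha2 : G.Adj c l2)
    (hB1 : l1 ∉ B) (hB2 : l2 ∉ B) : ¬ Forced G B l1 := by
  have key : ∀ s, Forced G B s → s ≠ l1 ∧ s ≠ l2 := by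
    intro s hs
    induction hs with
    | init x hx => exact ⟨fun h => hB1 (h ▸ hx), fun h => hB2 (h ▸ hx)⟩
    | force u w hu hadj hside ihu ihside =>
      constructor
      · rintro rfl
        have huc : u = c := h1 u hadj
        subst huc
        exact (ihside l2 ha2 (Ne.symm hne)).2 rfl
      · rintro rfl
        have huc : u = c := h2 u hadj
        subst huc
        exact (ihside l1 ha1 hne).1 rfl
  intro h
  exact (key l1 h).1 rfl

end AuxBasic
section LsvaAux

variable {α : Type} {H : SimpleGraph α} {v : α} {m : ℕ}

lemma lsva_adj_inl_inl_s16 {x y : α} :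
    (lsva H v m).Adj (Sum.inl x) (Sum.inl y) ↔ H.Adj x y := by
  simp [lsva]

lemma lsva_adj_inl_inr {x : α} {o : Option (Fin m)} :
    (lsva H v m).Adj (Sum.inl x) (Sum.inr o) ↔ x = v ∧ o = none := by
  constructor
  · rintro (⟨_, _, _, h, _⟩ | ⟨h1, h2⟩ | ⟨h, _⟩ | ⟨i, h, _⟩ | ⟨i, h, _⟩) <;>
      first
      | (exact absurd h (by simp))
      | (exact ⟨Sum.inl.inj h1, Sum.inr.inj h2⟩)
  · rintro ⟨rfl, rfl⟩; exact Or.inr (Or.inl ⟨rfl, rfl⟩)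

lemma lsva_adj_inr_inl {x : α} {o : Option (Fin m)} :
    (lsva H v m).Adj (Sum.inr o) (Sum.inl x) ↔ o = none ∧ x = v := by
  rw [(lsva H v m).adj_comm, lsva_adj_inl_inr]; tauto

lemma lsva_adj_inr_inr {o o' : Option (Fin m)} :
    (lsva H v m).Adj (Sum.inr o) (Sum.inr o') ↔
      (o = none ∧ ∃ i, o' = some i) ∨ (o' = none ∧ ∃ i, o = some i) := by
  constructor
  · rintro (⟨_, _, h, _, _⟩ | ⟨h, _⟩ | ⟨_, h⟩ | ⟨i, h1, h2⟩ | ⟨i, h1, h2⟩)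
    · exact absurd h (by simp)
    · exact absurd h (by simp)
    · exact absurd h (by simp)
    · exact Or.inl ⟨Sum.inr.inj h1, i, Sum.inr.inj h2⟩
    · exact Or.inr ⟨Sum.inr.inj h2, i, Sum.inr.inj h1⟩
  · rintro (⟨rfl, i, rfl⟩ | ⟨rfl, i, rfl⟩)
    · exact Or.inr (Or.inr (Or.inr (Or.inl ⟨i, rfl, rfl⟩)))
    · exact Or.inr (Or.inr (Or.inr (Or.inr ⟨i, rfl, rfl⟩)))

lemma lsva_nbr_inl_ne {x : α} (hx : x ≠ v) :
    (lsva H v m).neighborSet (Sum.inl x) = Sum.inl '' H.neighborSet x := by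
  ext (y | o)
  · simp [SimpleGraph.mem_neighborSet, lsva_adj_inl_inl_s16]
  · simp [SimpleGraph.mem_neighborSet, lsva_adj_inl_inr, hx]

lemma lsva_nbr_inl_v :
    (lsva H v m).neighborSet (Sum.inl v) =
      insert (Sum.inr none) (Sum.inl '' H.neighborSet v) := by
  ext (y | o)
  · simp [SimpleGraph.mem_neighborSet, lsva_adj_inl_inl_s16]
  · simp [SimpleGraph.mem_neighborSet, lsva_adj_inl_inr]

lemma lsva_nbr_none :
    (lsva H v m).neighborSet (Sum.inr (none : Option (Fin m))) =
      insert (Sum.inl v) (Sum.inr '' (some '' Set.univ)) := by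
  ext (y | o)
  · simp [SimpleGraph.mem_neighborSet, lsva_adj_inr_inl, eq_comm]
  · cases o <;> simp [SimpleGraph.mem_neighborSet, lsva_adj_inr_inr]

lemma lsva_nbr_some (i : Fin m) :
    (lsva H v m).neighborSet (Sum.inr (some i)) = {Sum.inr none} := by
  ext (y | o)
  · simp [SimpleGraph.mem_neighborSet, lsva_adj_inr_inl]
  · cases o <;> simp [SimpleGraph.mem_neighborSet, lsva_adj_inr_inr]

lemma lsva_deg_bound [Finite α] {k : ℕ} (hk : 3 ≤ k) (hm : m = k - 1)
    (hdeg : ∀ x, degSet H x ≤ k) (hv : (H.neighborSet v).ncard ≤ m - 1) :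
    ∀ s, degSet (lsva H v m) s ≤ k := by
  rintro (x | o)
  · by_cases hx : x = v
    · subst hx
      rw [degSet, lsva_nbr_inl_v, Set.ncard_insert_of_notMem (by simp) (Set.toFinite _),
        Set.ncard_image_of_injective _ Sum.inl_injective]
      omega
    · rw [degSet, lsva_nbr_inl_ne hx, Set.ncard_image_of_injective _ Sum.inl_injective]
      exact hdeg x
  · cases o with
    | none =>
      rw [degSet, lsva_nbr_none, Set.ncard_insert_of_notMem (by simp) (Set.toFinite _),
        Set.ncard_image_of_injective _ Sum.inr_injective,
        Set.ncard_image_of_injective _ (Option.some_injective _)]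
      have : (Set.univ : Set (Fin m)).ncard = m := by
        rw [Set.ncard_univ]; simp
      omega
    | some i =>
      rw [degSet, lsva_nbr_some, Set.ncard_singleton]
      omega

lemma lsva_deg_none [Finite α] : degSet (lsva H v m) (Sum.inr none) = m + 1 := by
  rw [degSet, lsva_nbr_none, Set.ncard_insert_of_notMem (by simp) (Set.toFinite _),
    Set.ncard_image_of_injective _ Sum.inr_injective,
    Set.ncard_image_of_injective _ (Option.some_injective _)]
  rw [Set.ncard_univ]; simp

end LsvaAux
section LsvaZF

variable {α : Type} {H : SimpleGraph α} {v : α} {m : ℕ}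

lemma lsva_forced_inl {B : Set α} {B' : Set (α ⊕ Option (Fin m))}
    (hB' : ∀ x ∈ B, Sum.inl x ∈ B')
    (hw : Forced (lsva H v m) B' (Sum.inr none))
    {x : α} (hx : Forced H B x) : Forced (lsva H v m) B' (Sum.inl x) := by
  induction hx with
  | init y hy => exact Forced.init _ (hB' y hy)
  | force u y hu hadj hside ihu ihside =>
    refine Forced.force (Sum.inl u) (Sum.inl y) ihu (lsva_adj_inl_inl_s16.2 hadj) ?_
    rintro (z | o) hz hne
    · exact ihside z (lsva_adj_inl_inl_s16.1 hz) (fun h => hne (by rw [h]))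
    · obtain ⟨-, rfl⟩ := lsva_adj_inl_inr.1 hz
      exact hw

lemma lsva_forced_down {B : Set (α ⊕ Option (Fin m))} {s}
    (hs : Forced (lsva H v m) B s) :
    ∀ x : α, s = Sum.inl x → Forced H (Sum.inl ⁻¹' B ∪ {v}) x := by
  induction hs with
  | init s hsB => rintro x rfl; exact Forced.init x (Or.inl hsB)
  | force u s hu hadj hside ihu ihside =>
    rintro x rfl
    rcases u with u' | o
    · refine Forced.force u' x (ihu u' rfl) (lsva_adj_inl_inl_s16.1 hadj) ?_
      intro z hz hzx
      exact ihside (Sum.inl z) (lsva_adj_inl_inl_s16.2 hz) (by simpa using hzx) z rfl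
    · obtain ⟨rfl, rfl⟩ := lsva_adj_inr_inl.1 hadj
      exact Forced.init _ (Or.inr rfl)

lemma lsva_forced_down' {B : Set (α ⊕ Option (Fin m))}
    (hw : Sum.inr none ∉ B) {l : Fin m} (hl : Sum.inr (some l) ∉ B)
    {s} (hs : Forced (lsva H v m) B s) :
    (∀ x : α, s = Sum.inl x → Forced H (Sum.inl ⁻¹' B) x) ∧
      (s = Sum.inr (some l) → Forced H (Sum.inl ⁻¹' B) v) := by
  induction hs with
  | init s hsB =>
    refine ⟨?_, ?_⟩
    · rintro x rfl; exact Forced.init x hsB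
    · rintro rfl; exact absurd hsB hl
  | force u s hu hadj hside ihu ihside =>
    refine ⟨?_, ?_⟩
    · rintro x rfl
      rcases u with u' | o
      · refine Forced.force u' x (ihu.1 u' rfl) (lsva_adj_inl_inl_s16.1 hadj) ?_
        intro z hz hzx
        exact (ihside (Sum.inl z) (lsva_adj_inl_inl_s16.2 hz) (by simpa using hzx)).1 z rfl
      · obtain ⟨rfl, rfl⟩ := lsva_adj_inr_inl.1 hadj
        exact (ihside (Sum.inr (some l))
          (lsva_adj_inr_inr.2 (Or.inl ⟨rfl, l, rfl⟩)) (by simp)).2 rfl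
    · rintro rfl
      rcases u with u' | o
      · obtain ⟨-, h⟩ := lsva_adj_inl_inr.1 hadj
        exact absurd h (by simp)
      · rcases lsva_adj_inr_inr.1 hadj with ⟨rfl, -⟩ | ⟨h, -⟩
        · exact (ihside (Sum.inl v) (lsva_adj_inr_inl.2 ⟨rfl, rfl⟩) (by simp)).1 v rfl
        · exact absurd h (by simp)

lemma lsva_zf_le [Finite α] (hm : 2 ≤ m) :
    zfNum (lsva H v m) ≤ zfNum H + (m - 1) := by
  obtain ⟨B, hB, hcard⟩ := exists_zfs_min H
  have hm0 : 0 < m := by omega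
  set e : Fin m := ⟨0, hm0⟩ with he
  set L : Set (α ⊕ Option (Fin m)) := Sum.inr '' (some '' {i : Fin m | i ≠ e}) with hL
  set B' : Set (α ⊕ Option (Fin m)) := Sum.inl '' B ∪ L with hB'
  have hmemL : ∀ i : Fin m, i ≠ e → Sum.inr (some i) ∈ B' :=
    fun i hi => Or.inr ⟨some i, ⟨i, hi, rfl⟩, rfl⟩
  have hwB : Forced (lsva H v m) B' (Sum.inr none) := by
    have h1 : (⟨1, by omega⟩ : Fin m) ≠ e := by
      simp [he, Fin.ext_iff]
    refine Forced.force (Sum.inr (some ⟨1, by omega⟩)) (Sum.inr none)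
      (Forced.init _ (hmemL _ h1))
      (lsva_adj_inr_inr.2 (Or.inr ⟨rfl, _, rfl⟩)) ?_
    rintro (z | o) hz hne
    · obtain ⟨h, -⟩ := lsva_adj_inr_inl.1 hz
      exact absurd h (by simp)
    · rcases lsva_adj_inr_inr.1 hz with ⟨h, -⟩ | ⟨rfl, -⟩
      · exact absurd h (by simp)
      · exact absurd rfl hne
  have hZ : IsZFS (lsva H v m) B' := by
    rintro (x | o)
    · exact lsva_forced_inl (fun x hx => Or.inl ⟨x, hx, rfl⟩) hwB (hB x)
    · cases o with
      | none => exact hwB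
      | some i =>
        by_cases hi : i = e
        · subst hi
          refine Forced.force (Sum.inr none) (Sum.inr (some e)) hwB
            (lsva_adj_inr_inr.2 (Or.inl ⟨rfl, _, rfl⟩)) ?_
          rintro (z | o) hz hne
          · obtain ⟨-, rfl⟩ := lsva_adj_inr_inl.1 hz
            exact lsva_forced_inl (fun x hx => Or.inl ⟨x, hx, rfl⟩) hwB (hB _)
          · rcases lsva_adj_inr_inr.1 hz with ⟨-, j, rfl⟩ | ⟨-, j, hj⟩
            · refine Forced.init _ (hmemL j (fun hj => hne ?_))
              rw [hj]
            · exact absurd hj (by simp)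
        · exact Forced.init _ (hmemL i hi)
  have hdisj : Disjoint (Sum.inl '' B : Set (α ⊕ Option (Fin m))) L := by
    rw [Set.disjoint_iff]
    rintro z ⟨⟨x, -, rfl⟩, ⟨o, -, h⟩⟩
    simp at h
  have hcardL : L.ncard = m - 1 := by
    rw [hL, Set.ncard_image_of_injective _ Sum.inr_injective,
      Set.ncard_image_of_injective _ (Option.some_injective _)]
    have : ({i : Fin m | i ≠ e} : Set (Fin m)) = {e}ᶜ := by ext i; simp
    rw [this]
    have h2 : ({e} : Set (Fin m)).ncard + ({e}ᶜ : Set (Fin m)).ncard = m := by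
      rw [Set.ncard_add_ncard_compl]; simp
    rw [Set.ncard_singleton] at h2
    omega
  have := zfNum_le hZ
  rw [hB', Set.ncard_union_eq hdisj (Set.toFinite _) (Set.toFinite _),
    Set.ncard_image_of_injective _ Sum.inl_injective, hcard, hcardL] at this
  exact this

end LsvaZF
section LsvaBounds

variable {α : Type} {H : SimpleGraph α} {v : α} {m : ℕ}

lemma lsva_leaf_unique_nbr {i : Fin m} {u : α ⊕ Option (Fin m)}
    (h : (lsva H v m).Adj u (Sum.inr (some i))) : u = Sum.inr none := by
  rcases u with x | o
  · obtain ⟨-, h⟩ := lsva_adj_inl_inr.1 h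
    exact absurd h (by simp)
  · rcases lsva_adj_inr_inr.1 h with ⟨rfl, -⟩ | ⟨h', -⟩
    · rfl
    · exact absurd h' (by simp)

lemma lsva_zf_ge [Finite α] (hm : 2 ≤ m) :
    zfNum H + (m - 1) ≤ zfNum (lsva H v m) := by
  obtain ⟨B, hB, hcard⟩ := exists_zfs_min (lsva H v m)
  -- at most one leaf is missing from B
  have hone : ∀ i j : Fin m, Sum.inr (some i) ∉ B → Sum.inr (some j) ∉ B → i = j := by
    intro i j hi hj
    by_contra hne
    exact no_two_leaves (fun u h => lsva_leaf_unique_nbr h) (fun u h => lsva_leaf_unique_nbr h)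
      (fun h => hne (Option.some.inj (Sum.inr.inj h)))
      (lsva_adj_inr_inr.2 (Or.inl ⟨rfl, i, rfl⟩))
      (lsva_adj_inr_inr.2 (Or.inl ⟨rfl, j, rfl⟩)) hi hj (hB _)
  have hsum := ncard_sum B
  set S : Set (Option (Fin m)) := Sum.inr ⁻¹' B with hS
  set SL : Set (Fin m) := {i : Fin m | Sum.inr (some i) ∈ B} with hSL
  have hSLcard : m - 1 ≤ SL.ncard := compl_subsingleton_ncard SL hone
  have hSLsub : some '' SL ⊆ S := by rintro o ⟨i, hi, rfl⟩; exact hi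
  have hScard : m - 1 ≤ S.ncard := by
    refine le_trans ?_ (Set.ncard_le_ncard hSLsub (Set.toFinite _))
    rw [Set.ncard_image_of_injective _ (Option.some_injective _)]
    exact hSLcard
  by_cases hcase : (none : Option (Fin m)) ∈ S ∨ ∀ i : Fin m, some i ∈ S
  -- Case A : the inr part of B has at least m elements
  · have hScard' : m ≤ S.ncard := by
      rcases hcase with hnone | hall
      · have hsub : insert none (some '' SL) ⊆ S := by
          rintro o (rfl | ⟨i, hi, rfl⟩)
          · exact hnone
          · exact hi
        refine le_trans ?_ (Set.ncard_le_ncard hsub (Set.toFinite _))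
        rw [Set.ncard_insert_of_notMem (by simp) (Set.toFinite _),
          Set.ncard_image_of_injective _ (Option.some_injective _)]
        omega
      · have hsub : some '' Set.univ ⊆ S := by rintro o ⟨i, -, rfl⟩; exact hall i
        refine le_trans ?_ (Set.ncard_le_ncard hsub (Set.toFinite _))
        rw [Set.ncard_image_of_injective _ (Option.some_injective _), Set.ncard_univ]
        simp
    have hZ : IsZFS H (Sum.inl ⁻¹' B ∪ {v}) :=
      fun x => lsva_forced_down (hB (Sum.inl x)) x rfl
    have h1 := zfNum_le hZ
    have h2 : (Sum.inl ⁻¹' B ∪ {v} : Set α).ncard ≤ (Sum.inl ⁻¹' B).ncard + 1 := by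
      refine le_trans (Set.ncard_union_le _ _) ?_
      simp
    omega
  -- Case B : w ∉ B and some leaf ∉ B
  · push_neg at hcase
    obtain ⟨hw, l, hl⟩ := hcase
    have hZ : IsZFS H (Sum.inl ⁻¹' B) :=
      fun x => (lsva_forced_down' hw hl (hB (Sum.inl x))).1 x rfl
    have h1 := zfNum_le hZ
    omega

lemma lsva_vc [Finite α] (hm : 1 ≤ m) :
    vcNum (lsva H v m) = vcNum H + 1 := by
  apply le_antisymm
  · obtain ⟨C, hC, hcard⟩ := exists_vc_min H
    have hVC : IsVC (lsva H v m) (insert (Sum.inr none) (Sum.inl '' C)) := by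
      rintro (x | o) (y | o') hadj
      · rcases hC (lsva_adj_inl_inl_s16.1 hadj) with h | h
        · exact Or.inl (Or.inr ⟨x, h, rfl⟩)
        · exact Or.inr (Or.inr ⟨y, h, rfl⟩)
      · obtain ⟨-, rfl⟩ := lsva_adj_inl_inr.1 hadj
        exact Or.inr (Or.inl rfl)
      · obtain ⟨rfl, -⟩ := lsva_adj_inr_inl.1 hadj
        exact Or.inl (Or.inl rfl)
      · rcases lsva_adj_inr_inr.1 hadj with ⟨rfl, -⟩ | ⟨rfl, -⟩
        · exact Or.inl (Or.inl rfl)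
        · exact Or.inr (Or.inl rfl)
    have := vcNum_le hVC
    rw [Set.ncard_insert_of_notMem (by simp) (Set.toFinite _),
      Set.ncard_image_of_injective _ Sum.inl_injective, hcard] at this
    exact this
  · obtain ⟨C', hC', hcard⟩ := exists_vc_min (lsva H v m)
    have hVC : IsVC H (Sum.inl ⁻¹' C') := by
      intro x y hadj
      exact hC' (lsva_adj_inl_inl_s16.2 hadj)
    have h1 := vcNum_le hVC
    have hsum := ncard_sum C'
    have hinr : 1 ≤ (Sum.inr ⁻¹' C' : Set (Option (Fin m))).ncard := by
      have hedge := hC' (lsva_adj_inr_inr.2 (Or.inl ⟨rfl, ⟨0, hm⟩, rfl⟩))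
      refine (Set.ncard_pos (Set.toFinite _)).2 ?_
      rcases hedge with h | h
      · exact ⟨none, h⟩
      · exact ⟨some ⟨0, hm⟩, h⟩
    omega

end LsvaBounds
section StarBase

variable {k : ℕ}

lemma star_adj_iff {a b : Fin 1 ⊕ Fin k} :
    (completeBipartiteGraph (Fin 1) (Fin k)).Adj a b ↔
      (∃ j : Fin k, a = Sum.inl 0 ∧ b = Sum.inr j) ∨
      (∃ j : Fin k, a = Sum.inr j ∧ b = Sum.inl 0) := by
  rcases a with x | i <;> rcases b with y | j
  · simp [completeBipartiteGraph]
  · simp [completeBipartiteGraph, Subsingleton.elim x 0]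
  · simp [completeBipartiteGraph, Subsingleton.elim y 0]
  · simp [completeBipartiteGraph]

lemma star_nbr_inl (x : Fin 1) :
    (completeBipartiteGraph (Fin 1) (Fin k)).neighborSet (Sum.inl x) =
      Sum.inr '' Set.univ := by
  ext (y | j) <;> simp [SimpleGraph.mem_neighborSet, star_adj_iff]

lemma star_nbr_inr (i : Fin k) :
    (completeBipartiteGraph (Fin 1) (Fin k)).neighborSet (Sum.inr i) =
      {Sum.inl 0} := by
  ext (y | j)
  · simp [SimpleGraph.mem_neighborSet, star_adj_iff, Subsingleton.elim y 0]
  · simp [SimpleGraph.mem_neighborSet, star_adj_iff]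

lemma star_deg_bound (hk : 3 ≤ k) : ∀ s, degSet (completeBipartiteGraph (Fin 1) (Fin k)) s ≤ k := by
  rintro (x | i)
  · rw [degSet, star_nbr_inl, Set.ncard_image_of_injective _ Sum.inr_injective,
      Set.ncard_univ]
    simp
  · rw [degSet, star_nbr_inr, Set.ncard_singleton]
    omega

lemma star_deg_center (hk : 3 ≤ k) :
    degSet (completeBipartiteGraph (Fin 1) (Fin k)) (Sum.inl 0) = k := by
  rw [degSet, star_nbr_inl, Set.ncard_image_of_injective _ Sum.inr_injective,
    Set.ncard_univ]
  simp

lemma star_vc (hk : 3 ≤ k) : vcNum (completeBipartiteGraph (Fin 1) (Fin k)) = 1 := by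
  apply le_antisymm
  · have hVC : IsVC (completeBipartiteGraph (Fin 1) (Fin k)) {Sum.inl 0} := by
      intro a b hadj
      rcases star_adj_iff.1 hadj with ⟨j, rfl, rfl⟩ | ⟨j, rfl, rfl⟩
      · exact Or.inl rfl
      · exact Or.inr rfl
    have := vcNum_le hVC
    rwa [Set.ncard_singleton] at this
  · by_contra h
    push_neg at h
    interval_cases hv : vcNum (completeBipartiteGraph (Fin 1) (Fin k))
    obtain ⟨C, hC, hcard⟩ := exists_vc_min (completeBipartiteGraph (Fin 1) (Fin k))
    rw [hv, Set.ncard_eq_zero (Set.toFinite _)] at hcard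
    subst hcard
    have : (completeBipartiteGraph (Fin 1) (Fin k)).Adj (Sum.inl 0) (Sum.inr ⟨0, by omega⟩) :=
      star_adj_iff.2 (Or.inl ⟨_, rfl, rfl⟩)
    rcases hC this with h' | h' <;> exact h'

lemma star_zf (hk : 3 ≤ k) : zfNum (completeBipartiteGraph (Fin 1) (Fin k)) = k - 1 := by
  apply le_antisymm
  · set e : Fin k := ⟨0, by omega⟩ with he
    set B : Set (Fin 1 ⊕ Fin k) := Sum.inr '' {i : Fin k | i ≠ e} with hB
    have hmem : ∀ i : Fin k, i ≠ e → Sum.inr i ∈ B := fun i hi => ⟨i, hi, rfl⟩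
    have hcenter : Forced (completeBipartiteGraph (Fin 1) (Fin k)) B (Sum.inl 0) := by
      have h1 : (⟨1, by omega⟩ : Fin k) ≠ e := by simp [he, Fin.ext_iff]
      refine Forced.force (Sum.inr ⟨1, by omega⟩) (Sum.inl 0)
        (Forced.init _ (hmem _ h1)) (star_adj_iff.2 (Or.inr ⟨_, rfl, rfl⟩)) ?_
      intro x hx hne
      rcases star_adj_iff.1 hx with ⟨j, h', -⟩ | ⟨j, -, rfl⟩
      · exact absurd h' (by simp)
      · exact absurd rfl hne
    have hZ : IsZFS (completeBipartiteGraph (Fin 1) (Fin k)) B := by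
      rintro (x | i)
      · rw [Subsingleton.elim x 0]; exact hcenter
      · by_cases hi : i = e
        · subst hi
          refine Forced.force (Sum.inl 0) (Sum.inr e) hcenter
            (star_adj_iff.2 (Or.inl ⟨_, rfl, rfl⟩)) ?_
          intro x hx hne
          rcases star_adj_iff.1 hx with ⟨j, -, rfl⟩ | ⟨j, h', -⟩
          · refine Forced.init _ (hmem j fun hj => hne ?_)
            rw [hj]
          · exact absurd h' (by simp)
        · exact Forced.init _ (hmem i hi)
    have := zfNum_le hZ
    rw [hB, Set.ncard_image_of_injective _ Sum.inr_injective] at this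
    have hc : ({i : Fin k | i ≠ e} : Set (Fin k)).ncard = k - 1 := by
      have h2 : ({e} : Set (Fin k)).ncard + ({e}ᶜ : Set (Fin k)).ncard = k := by
        rw [Set.ncard_add_ncard_compl]; simp
      rw [Set.ncard_singleton] at h2
      have : ({i : Fin k | i ≠ e} : Set (Fin k)) = {e}ᶜ := by ext i; simp
      rw [this]
      omega
    rwa [hc] at this
  · obtain ⟨B, hB, hcard⟩ := exists_zfs_min (completeBipartiteGraph (Fin 1) (Fin k))
    have hone : ∀ i j : Fin k, Sum.inr i ∉ B → Sum.inr j ∉ B → i = j := by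
      intro i j hi hj
      by_contra hne
      refine no_two_leaves (c := Sum.inl 0) (fun u h => ?_) (fun u h => ?_)
        (fun h => hne (Sum.inr.inj h))
        (star_adj_iff.2 (Or.inl ⟨_, rfl, rfl⟩))
        (star_adj_iff.2 (Or.inl ⟨_, rfl, rfl⟩)) hi hj (hB _)
      · rcases star_adj_iff.1 h with ⟨j', rfl, -⟩ | ⟨j', -, h'⟩
        · rfl
        · exact absurd h' (by simp)
      · rcases star_adj_iff.1 h with ⟨j', rfl, -⟩ | ⟨j', -, h'⟩
        · rfl
        · exact absurd h' (by simp)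
    have hsum := ncard_sum B
    have hSL : k - 1 ≤ (Sum.inr ⁻¹' B : Set (Fin k)).ncard :=
      compl_subsingleton_ncard _ (fun i j hi hj => hone i j hi hj)
    omega

end StarBase
section Main

/-- The inductive invariant: finiteness, all degrees at most `k`, some vertex of degree `k`,
and the zero forcing / vertex cover identity. -/
def Good (k : ℕ) {α : Type} (H : SimpleGraph α) : Prop :=
  Finite α ∧ (∀ x, degSet H x ≤ k) ∧ (∃ x, degSet H x = k) ∧
    zfNum H = (k - 2) * vcNum H + 1

lemma Good.star {k : ℕ} (hk : 3 ≤ k) : Good k (completeBipartiteGraph (Fin 1) (Fin k)) :=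
  ⟨by infer_instance, star_deg_bound hk, ⟨Sum.inl 0, star_deg_center hk⟩, by
    rw [star_zf hk, star_vc hk]; omega⟩

lemma Good.step {k : ℕ} (hk : 3 ≤ k) {α : Type} {H : SimpleGraph α} (hG : Good k H)
    (v : α) (hv : (H.neighborSet v).ncard ≤ (k - 1) - 1) :
    Good k (lsva H v (k - 1)) := by
  obtain ⟨hfin, hdeg, hex, hzf⟩ := hG
  haveI := hfin
  have hm2 : 2 ≤ k - 1 := by omega
  refine ⟨by infer_instance, lsva_deg_bound hk rfl hdeg hv, ⟨Sum.inr none, ?_⟩, ?_⟩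
  · rw [lsva_deg_none]; omega
  · have h1 := lsva_zf_le (H := H) (v := v) hm2
    have h2 := lsva_zf_ge (H := H) (v := v) hm2
    have h3 := lsva_vc (H := H) (v := v) (m := k - 1) (by omega)
    have h4 : zfNum (lsva H v (k - 1)) = zfNum H + (k - 2) := by omega
    rw [h4, h3, hzf, Nat.mul_add, Nat.mul_one]
    omega

lemma chain_good {k : ℕ} (hk : 3 ≤ k) {α β : Type} {G : SimpleGraph α} {H : SimpleGraph β}
    (h : LSVAChain (k - 1) G H) : Good k G → Good k H := by
  induction h with
  | refl => exact id
  | step v hv h ih => exact fun hG => Good.step hk (ih hG) v hv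

end Main

/-- For `k ≥ 3`, every graph obtained from the star `K_{1,k}` by a finite
sequence of `(k-1)`-leaf support vertex additions has maximum degree `k` and satisfies
`Z(T) = (k - 2)·β(T) + 1`. -/
theorem stmt16 (k : ℕ) (hk : 3 ≤ k) {V : Type} [Fintype V] (T : SimpleGraph V)
    (hT : LSVAChain (k - 1) (completeBipartiteGraph (Fin 1) (Fin k)) T) :
    maxDeg T = k ∧ zfNum T = (k - 2) * vcNum T + 1 := by
  obtain ⟨hfin, hdeg, ⟨x, hx⟩, hzf⟩ := chain_good hk hT (Good.star hk)
  refine ⟨le_antisymm ?_ ?_, hzf⟩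
  · exact csSup_le ⟨degSet T x, x, rfl⟩ (by rintro d ⟨y, rfl⟩; exact hdeg y)
  · exact le_csSup ⟨k, by rintro d ⟨y, rfl⟩; exact hdeg y⟩ ⟨x, hx⟩

end ZFPaper
end
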